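/- arXiv:1108.3861 — 3 statements merged into one kernel-verified Lean document; each statement's English description precedes it below -/
import Mathlib

section
/- Let r be fixed and y = (1/2) log h. For distinct integers 0 ≤ h₁,…,h_r ≤ h, the partial product ∏_{p > y} (1 - ν_p(h)/p)(1 - 1/p)^{-r} equals 1 + O(1/log log h), uniformly in the tuple. -/
open Finset

noncomputable def nu (p : ℕ) {r : ℕ} (a : Fin r → ℤ) : ℕ :=
  (Finset.univ.image (fun i => ((a i : ZMod p)))).card

namespace TailAux

lemma aux_exp_bound (S : ℝ) : |Real.exp S - 1| ≤ |S| * Real.exp |S| := by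
  rcases le_or_gt 0 S with hS | hS
  · rw [abs_of_nonneg hS, abs_of_nonneg (by simpa using Real.one_le_exp hS)]
    have h1 := Real.add_one_le_exp (-S)
    have h2 := Real.exp_pos S
    have h3 : Real.exp (-S) * Real.exp S = 1 := by
      rw [← Real.exp_add]; simp
    nlinarith
  · rw [abs_of_neg hS, abs_of_nonpos (by simpa using Real.exp_le_one_iff.mpr hS.le)]
    have h1 := Real.add_one_le_exp S
    have h2 : (1:ℝ) ≤ Real.exp (-S) := Real.one_le_exp (by linarith)
    nlinarith

lemma aux_log_lb {x : ℝ} (h1 : x < 1) : x ≤ -Real.log (1 - x) := by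
  have := Real.log_le_sub_one_of_pos (x := 1 - x) (by linarith)
  linarith

lemma aux_log_ub {x : ℝ} (h0 : 0 ≤ x) (h1 : x < 1) : -Real.log (1 - x) ≤ x / (1 - x) := by
  have hpos : 0 < 1 - x := by linarith
  have h := Real.log_le_sub_one_of_pos (x := (1 - x)⁻¹) (by positivity)
  rw [Real.log_inv] at h
  have h2 : -Real.log (1-x) ≤ (1-x)⁻¹ - 1 := by linarith
  calc -Real.log (1-x) ≤ (1-x)⁻¹ - 1 := h2
    _ = x / (1-x) := by field_simp; ring

lemma g_bounds {q ν r : ℕ} (hq2 : 2 ≤ q) (hνq : ν < q) :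
    -((ν:ℝ)/((q:ℝ)-(ν:ℝ))) + r/q ≤
      Real.log ((1 - (ν:ℝ)/q) * ((1 - 1/(q:ℝ))⁻¹)^r) ∧
    Real.log ((1 - (ν:ℝ)/q) * ((1 - 1/(q:ℝ))⁻¹)^r) ≤ -((ν:ℝ)/q) + r/((q:ℝ)-1) := by
  have hQ : (2:ℝ) ≤ (q:ℝ) := by exact_mod_cast hq2
  have hN0 : (0:ℝ) ≤ (ν:ℝ) := Nat.cast_nonneg _
  have hNQ : (ν:ℝ) < (q:ℝ) := by exact_mod_cast hνq
  have hQ0 : (0:ℝ) < q := by linarith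
  have hx1 : (ν:ℝ)/q < 1 := (div_lt_one hQ0).mpr hNQ
  have hx10 : (0:ℝ) ≤ (ν:ℝ)/q := by positivity
  have hx2 : 1/(q:ℝ) < 1 := by rw [div_lt_one hQ0]; linarith
  have hx20 : (0:ℝ) ≤ 1/(q:ℝ) := by positivity
  have h1 : (0:ℝ) < 1 - (ν:ℝ)/q := by linarith
  have h2 : (0:ℝ) < 1 - 1/(q:ℝ) := by linarith
  have hlog : Real.log ((1 - (ν:ℝ)/q) * ((1 - 1/(q:ℝ))⁻¹)^r)
      = Real.log (1 - (ν:ℝ)/q) - r * Real.log (1 - 1/(q:ℝ)) := by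
    rw [Real.log_mul h1.ne' (pow_ne_zero _ (inv_ne_zero h2.ne')), Real.log_pow,
      Real.log_inv]
    ring
  have hA1 : (ν:ℝ)/q ≤ -Real.log (1 - (ν:ℝ)/q) := aux_log_lb hx1
  have hA2 : -Real.log (1 - (ν:ℝ)/q) ≤ ((ν:ℝ)/q) / (1 - (ν:ℝ)/q) := aux_log_ub hx10 hx1
  have hB1 : 1/(q:ℝ) ≤ -Real.log (1 - 1/(q:ℝ)) := aux_log_lb hx2
  have hB2 : -Real.log (1 - 1/(q:ℝ)) ≤ (1/(q:ℝ)) / (1 - 1/(q:ℝ)) := aux_log_ub hx20 hx2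
  have hqν : (q:ℝ) - (ν:ℝ) ≠ 0 := by linarith
  have hq1 : (q:ℝ) - 1 ≠ 0 := by linarith
  have h1' : (1 - (ν:ℝ)/q) ≠ 0 := h1.ne'
  have h2' : (1 - 1/(q:ℝ)) ≠ 0 := h2.ne'
  have e1 : ((ν:ℝ)/q) / (1 - (ν:ℝ)/q) = (ν:ℝ)/((q:ℝ)-(ν:ℝ)) := by
    field_simp
  have e2 : (1/(q:ℝ)) / (1 - 1/(q:ℝ)) = 1/((q:ℝ)-1) := by
    field_simp
  rw [e1] at hA2
  rw [e2] at hB2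
  have hr0 : (0:ℝ) ≤ (r:ℝ) := Nat.cast_nonneg _
  constructor
  · rw [hlog]
    have h5 := mul_le_mul_of_nonneg_left hB1 hr0
    ring_nf at hA1 hA2 hB1 hB2 h5 ⊢
    linarith
  · rw [hlog]
    have h5 := mul_le_mul_of_nonneg_left hB2 hr0
    ring_nf at hA1 hA2 hB1 hB2 h5 ⊢
    linarith

lemma g_abs_crude {q ν r : ℕ} (hq2 : 2 ≤ q) (hνq : ν < q) :
    |Real.log ((1 - (ν:ℝ)/q) * ((1 - 1/(q:ℝ))⁻¹)^r)| ≤ (q:ℝ) + r := by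
  obtain ⟨lb, ub⟩ := g_bounds (r := r) hq2 hνq
  have hQ : (2:ℝ) ≤ (q:ℝ) := by exact_mod_cast hq2
  have hN0 : (0:ℝ) ≤ (ν:ℝ) := Nat.cast_nonneg _
  have hr0 : (0:ℝ) ≤ (r:ℝ) := Nat.cast_nonneg _
  have hNQ : (ν:ℝ) + 1 ≤ (q:ℝ) := by exact_mod_cast hνq
  have h1 : (ν:ℝ)/((q:ℝ)-(ν:ℝ)) ≤ (ν:ℝ) := div_le_self hN0 (by linarith)
  have h2 : (r:ℝ)/((q:ℝ)-1) ≤ (r:ℝ) := div_le_self hr0 (by linarith)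
  have h3 : (0:ℝ) ≤ (ν:ℝ)/q := by positivity
  have h4 : (0:ℝ) ≤ (r:ℝ)/q := by positivity
  rw [abs_le]
  constructor <;> nlinarith

lemma g_abs_bad {q ν r : ℕ} (hq : 2*r+2 ≤ q) (hνq : ν < q) (hνr : ν ≤ r) (hr : 1 ≤ r) :
    |Real.log ((1 - (ν:ℝ)/q) * ((1 - 1/(q:ℝ))⁻¹)^r)| ≤ 2*(r:ℝ)/q := by
  obtain ⟨lb, ub⟩ := g_bounds (r := r) (by omega) hνq
  have hQ : 2*(r:ℝ)+2 ≤ (q:ℝ) := by exact_mod_cast hq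
  have hr1 : (1:ℝ) ≤ (r:ℝ) := by exact_mod_cast hr
  have hN0 : (0:ℝ) ≤ (ν:ℝ) := Nat.cast_nonneg _
  have hNr : (ν:ℝ) ≤ (r:ℝ) := by exact_mod_cast hνr
  have hQ0 : (0:ℝ) < (q:ℝ) := by linarith
  have hQν : (0:ℝ) < (q:ℝ) - ν := by linarith
  have hQ1 : (0:ℝ) < (q:ℝ) - 1 := by linarith
  have h1 : (ν:ℝ)/((q:ℝ)-(ν:ℝ)) ≤ 2*(r:ℝ)/q := by
    rw [div_le_div_iff₀ hQν hQ0]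
    nlinarith
  have h2 : (r:ℝ)/((q:ℝ)-1) ≤ 2*(r:ℝ)/q := by
    rw [div_le_div_iff₀ hQ1 hQ0]
    nlinarith
  have h3 : (0:ℝ) ≤ (ν:ℝ)/q := by positivity
  have h4 : (0:ℝ) ≤ (r:ℝ)/q := by positivity
  rw [abs_le]
  constructor <;> linarith

lemma g_abs_good {q r : ℕ} (hq : 2*r+2 ≤ q) (hr : 1 ≤ r) :
    |Real.log ((1 - (r:ℝ)/q) * ((1 - 1/(q:ℝ))⁻¹)^r)| ≤ 2*(r:ℝ)^2/(q:ℝ)^2 := by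
  have hrq : r < q := by omega
  obtain ⟨lb, ub⟩ := g_bounds (r := r) (ν := r) (by omega) hrq
  have hQ : 2*(r:ℝ)+2 ≤ (q:ℝ) := by exact_mod_cast hq
  have hr1 : (1:ℝ) ≤ (r:ℝ) := by exact_mod_cast hr
  have hQ0 : (0:ℝ) < (q:ℝ) := by linarith
  have hQν : (0:ℝ) < (q:ℝ) - r := by linarith
  have hQ1 : (0:ℝ) < (q:ℝ) - 1 := by linarith
  have h1 : (r:ℝ)/((q:ℝ)-(r:ℝ)) - (r:ℝ)/q ≤ 2*(r:ℝ)^2/(q:ℝ)^2 := by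
    rw [div_sub_div _ _ hQν.ne' hQ0.ne', div_le_div_iff₀ (by positivity) (by positivity)]
    nlinarith [mul_nonneg (mul_nonneg (sq_nonneg ((r:ℝ))) hQ0.le)
      (by linarith : (0:ℝ) ≤ (q:ℝ) - 2*r)]
  have h2 : (r:ℝ)/((q:ℝ)-1) - (r:ℝ)/q ≤ 2*(r:ℝ)^2/(q:ℝ)^2 := by
    rw [div_sub_div _ _ hQ1.ne' hQ0.ne', div_le_div_iff₀ (by positivity) (by positivity)]
    have key : (0:ℝ) ≤ 2*(r:ℝ)*(q:ℝ) - 2*r - q := by nlinarith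
    nlinarith [mul_nonneg (mul_nonneg (by linarith : (0:ℝ) ≤ (r:ℝ)) hQ0.le) key]
  rw [abs_le]
  constructor <;> linarith

lemma aux_rpow {y Q : ℝ} (hy : 1 ≤ y) (hQ : y < Q) :
    1/Q^2 ≤ (1/Real.sqrt y) * Q^(-(3/2) : ℝ) := by
  have hQ0 : (0:ℝ) < Q := by linarith
  have h5 : 0 < Real.sqrt y := Real.sqrt_pos.mpr (by linarith)
  have h6 : 0 < Q^((3/2):ℝ) := Real.rpow_pos_of_pos hQ0 _
  have h1 : (1/Real.sqrt y) * Q^(-(3/2) : ℝ) = 1/(Real.sqrt y * Q^((3/2):ℝ)) := by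
    rw [Real.rpow_neg hQ0.le]
    field_simp
  have h2 : (Q:ℝ)^2 = Q^((3/2):ℝ) * Real.sqrt Q := by
    rw [Real.sqrt_eq_rpow, ← Real.rpow_add hQ0, ← Real.rpow_natCast Q 2]
    norm_num
  have h4 : Real.sqrt y ≤ Real.sqrt Q := Real.sqrt_le_sqrt (by linarith)
  rw [h1, h2]
  apply one_div_le_one_div_of_le (by positivity)
  calc Real.sqrt y * Q^((3/2):ℝ) ≤ Real.sqrt Q * Q^((3/2):ℝ) := by
        apply mul_le_mul_of_nonneg_right h4 h6.le
    _ = Q^((3/2):ℝ) * Real.sqrt Q := by ring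

lemma aux_numerics {x : ℝ} (hx : 2.772 ≤ x) :
    1 ≤ Real.log x ∧ 0 < Real.log (x/2) ∧ Real.log x ≤ 4 * Real.log (x/2)
      ∧ Real.log x ≤ 3 * Real.sqrt (x/2) := by
  set y := x/2 with hy
  have hy1 : 1.386 ≤ y := by rw [hy]; linarith
  have hy0 : (0:ℝ) < y := by linarith
  have hlogy : 1 - y⁻¹ ≤ Real.log y := by
    have h := Real.log_le_sub_one_of_pos (x := y⁻¹) (by positivity)
    rw [Real.log_inv] at h
    linarith
  have hyinv : y⁻¹ ≤ 1.386⁻¹ := by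
    apply inv_anti₀ (by norm_num) hy1
  have hlogy278 : (0.27:ℝ) ≤ Real.log y := by
    have h7215 : (1.386:ℝ)⁻¹ ≤ 0.722 := by norm_num
    linarith
  have hxy : x = 2 * y := by rw [hy]; ring
  have hlogx : Real.log x = Real.log 2 + Real.log y := by
    rw [hxy, Real.log_mul two_ne_zero hy0.ne']
  have hlog2 := Real.log_two_lt_d9
  have h1 : 1 ≤ Real.log x := by
    have h := Real.log_le_log (Real.exp_pos 1) (le_trans (le_of_lt (by
      calc Real.exp 1 < 2.7182818286 := Real.exp_one_lt_d9
        _ < 2.772 := by norm_num)) hx)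
    rwa [Real.log_exp] at h
  refine ⟨h1, by linarith, by linarith, ?_⟩
  have hsx : Real.log x = 2 * Real.log (Real.sqrt x) := by
    rw [Real.log_sqrt (by linarith)]; ring
  have h2 : Real.log (Real.sqrt x) ≤ Real.sqrt x - 1 :=
    Real.log_le_sub_one_of_pos (Real.sqrt_pos.mpr (by linarith))
  have h3 : Real.sqrt x = Real.sqrt 2 * Real.sqrt y := by
    rw [hxy, Real.sqrt_mul (by norm_num)]
  have h4 : Real.sqrt 2 ≤ 1.5 := by
    nlinarith [Real.sq_sqrt (by norm_num : (0:ℝ) ≤ 2), Real.sqrt_nonneg 2]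
  have h5 : 0 ≤ Real.sqrt y := Real.sqrt_nonneg y
  calc Real.log x = 2 * Real.log (Real.sqrt x) := hsx
    _ ≤ 2 * (Real.sqrt x - 1) := by linarith
    _ ≤ 2 * (Real.sqrt 2 * Real.sqrt y) := by rw [h3]; linarith
    _ ≤ 3 * Real.sqrt y := by nlinarith

lemma nu_le_r (p : ℕ) {r : ℕ} (a : Fin r → ℤ) : nu p a ≤ r := by
  calc nu p a ≤ (Finset.univ : Finset (Fin r)).card := Finset.card_image_le
    _ = r := by simp

lemma nu_pos (p : ℕ) {r : ℕ} (hr : 0 < r) (a : Fin r → ℤ) : 0 < nu p a := by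
  apply Finset.card_pos.mpr
  exact (Finset.univ_nonempty_iff.mpr (Fin.pos_iff_nonempty.mp hr)).image _

lemma nu_le_p {p : ℕ} (hp : p.Prime) {r : ℕ} (a : Fin r → ℤ) : nu p a ≤ p := by
  haveI : NeZero p := ⟨hp.ne_zero⟩
  calc nu p a ≤ Fintype.card (ZMod p) := Finset.card_le_univ _
    _ = p := ZMod.card p

lemma nu_eq_r {p : ℕ} {r : ℕ} (a : Fin r → ℤ)
    (hnd : ∀ i j : Fin r, i ≠ j → ¬ ((p : ℤ) ∣ (a i - a j))) : nu p a = r := by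
  have hinj : Function.Injective (fun i => ((a i : ZMod p))) := by
    intro i j hij
    by_contra hne
    exact hnd i j hne ((ZMod.intCast_eq_intCast_iff _ _ _).mp hij).symm.dvd
  rw [nu, Finset.card_image_of_injective _ hinj, Finset.card_univ, Fintype.card_fin]

noncomputable def Z : ℝ := ∑' n : ℕ, (n:ℝ)^(-(3/2) : ℝ)

lemma Z_nonneg : 0 ≤ Z := tsum_nonneg (fun n => Real.rpow_nonneg (Nat.cast_nonneg n) _)

lemma Z_summable : Summable (fun n : ℕ => (n:ℝ)^(-(3/2) : ℝ)) :=
  Real.summable_nat_rpow.mpr (by norm_num)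

noncomputable def K (r : ℕ) : ℝ :=
  ((2*(r:ℝ)+2)*(3*r+1)) * Real.log (4*r+4) + 16*(r:ℝ)^3 + 6*(r:ℝ)^2 * Z

lemma K_nonneg (r : ℕ) : 0 ≤ K r := by
  have h1 : (0:ℝ) ≤ Real.log (4*(r:ℝ)+4) := Real.log_nonneg (by
    have := Nat.cast_nonneg (α := ℝ) r
    linarith)
  have hZ := Z_nonneg
  unfold K
  have h2 : (0:ℝ) ≤ (2*(r:ℝ)+2)*(3*r+1) := by positivity
  have h3 : (0:ℝ) ≤ 16*(r:ℝ)^3 := by positivity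
  have h4 : (0:ℝ) ≤ 6*(r:ℝ)^2 := by positivity
  nlinarith [mul_nonneg h2 h1, mul_nonneg h4 hZ]

end TailAux


set_option maxHeartbeats 2000000 in
open TailAux in
/-- Core estimate in the main case. -/
theorem tail_core (r : ℕ) (hr : 1 ≤ r) (h : ℕ) (h16 : 16 ≤ h) (a : Fin r → ℤ)
    (ha : ∀ i, a i ∈ Finset.Icc (0:ℤ) (h:ℤ))
    (hdist : ∀ i j : Fin r, i ≠ j → a i ≠ a j)
    (hlt : ∀ p : {p : Nat.Primes // Real.log h / 2 < ((p : ℕ) : ℝ)},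
      nu (p : ℕ) a < (p : ℕ)) :
    |(∏' p : {p : Nat.Primes // Real.log h / 2 < ((p : ℕ) : ℝ)},
        ((1 - (nu (p : ℕ) a : ℝ) / ((p : ℕ) : ℝ)) * ((1 - 1 / ((p : ℕ) : ℝ))⁻¹) ^ r))
      - 1| ≤ (Real.exp (K r) * K r) / Real.log (Real.log h) := by
  classical
  have hh16 : (16:ℝ) ≤ (h:ℝ) := by exact_mod_cast h16
  have hlogh : (2.772:ℝ) ≤ Real.log h := by
    have h0 : Real.log 16 ≤ Real.log h := Real.log_le_log (by norm_num) hh16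
    have h1 : Real.log 16 = 4 * Real.log 2 := by
      rw [show (16:ℝ) = 2^4 by norm_num, Real.log_pow]; norm_num
    have := Real.log_two_gt_d9
    linarith
  obtain ⟨hL1, hly0, hL4y, hLsq⟩ := aux_numerics hlogh
  have hL0 : 0 < Real.log (Real.log h) := by linarith
  have hy0 : (0:ℝ) < Real.log h / 2 := by linarith
  have hy1 : (1:ℝ) ≤ Real.log h / 2 := by linarith
  have hr1 : (1:ℝ) ≤ (r:ℝ) := by exact_mod_cast hr
  set F : {p : Nat.Primes // Real.log h / 2 < ((p : ℕ) : ℝ)} → ℝ :=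
    fun p => ((1 - (nu (p : ℕ) a : ℝ) / ((p : ℕ) : ℝ)) * ((1 - 1 / ((p : ℕ) : ℝ))⁻¹) ^ r)
    with hF
  have hprime : ∀ p : {p : Nat.Primes // Real.log h / 2 < ((p : ℕ) : ℝ)},
      ((p : ℕ)).Prime := fun p => p.1.2
  have hq2 : ∀ p : {p : Nat.Primes // Real.log h / 2 < ((p : ℕ) : ℝ)},
      2 ≤ (p : ℕ) := fun p => (hprime p).two_le
  have vinj : Function.Injective
      (fun p : {p : Nat.Primes // Real.log h / 2 < ((p : ℕ) : ℝ)} => (p : ℕ)) :=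
    fun p q hpq => Subtype.ext (Subtype.ext hpq)
  have hFpos : ∀ p, 0 < F p := by
    intro p
    have h1 : (2:ℝ) ≤ ((p:ℕ):ℝ) := by exact_mod_cast hq2 p
    have h2 : (nu (p:ℕ) a : ℝ) < ((p:ℕ):ℝ) := by exact_mod_cast hlt p
    have h3 : (0:ℝ) < 1 - (nu (p:ℕ) a : ℝ)/((p:ℕ):ℝ) := by
      rw [sub_pos, div_lt_one (by linarith)]; exact h2
    have h4 : (0:ℝ) < 1 - 1/((p:ℕ):ℝ) := by
      rw [sub_pos, div_lt_one (by linarith)]; linarith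
    rw [hF]
    positivity
  set g : {p : Nat.Primes // Real.log h / 2 < ((p : ℕ) : ℝ)} → ℝ :=
    fun p => Real.log (F p) with hg
  have hFg : ∀ p, F p = Real.exp (g p) := fun p => (Real.exp_log (hFpos p)).symm
  set Hn : ℕ := (∏ ij ∈ (Finset.univ : Finset (Fin r)).offDiag,
      (a ij.1 - a ij.2)).natAbs with hHn
  have hHn0 : Hn ≠ 0 := by
    rw [hHn, Int.natAbs_ne_zero]
    rw [Finset.prod_ne_zero_iff]
    intro ij hij
    rw [Finset.mem_offDiag] at hij
    exact sub_ne_zero.mpr (hdist _ _ hij.2.2)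
  have hh1 : (1:ℤ) ≤ (h:ℤ) := by exact_mod_cast Nat.one_le_iff_ne_zero.mpr (by omega)
  have hHnle : (Hn:ℝ) ≤ (h:ℝ)^(r^2) := by
    have e1 : (Hn:ℤ) = |∏ ij ∈ (Finset.univ : Finset (Fin r)).offDiag,
        (a ij.1 - a ij.2)| := by rw [hHn, Int.abs_eq_natAbs]
    have e2 : |∏ ij ∈ (Finset.univ : Finset (Fin r)).offDiag, (a ij.1 - a ij.2)|
        = ∏ ij ∈ (Finset.univ : Finset (Fin r)).offDiag, |a ij.1 - a ij.2| :=
      Finset.abs_prod _ _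
    have e3 : ∏ ij ∈ (Finset.univ : Finset (Fin r)).offDiag, |a ij.1 - a ij.2|
        ≤ ∏ _ij ∈ (Finset.univ : Finset (Fin r)).offDiag, (h:ℤ) := by
      apply Finset.prod_le_prod (fun _ _ => abs_nonneg _)
      intro ij _
      have h1 := ha ij.1
      have h2 := ha ij.2
      rw [Finset.mem_Icc] at h1 h2
      rw [abs_le]
      constructor <;> linarith [h1.1, h1.2, h2.1, h2.2]
    have e5 : (h:ℤ)^((Finset.univ : Finset (Fin r)).offDiag.card) ≤ (h:ℤ)^(r^2) := by
      apply pow_le_pow_right₀ hh1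
      rw [Finset.offDiag_card, Finset.card_univ, Fintype.card_fin]
      calc r*r - r ≤ r*r := Nat.sub_le _ _
        _ = r^2 := (sq r).symm
    have e6 : (Hn:ℤ) ≤ (h:ℤ)^(r^2) := by
      rw [e1, e2]
      refine le_trans e3 ?_
      rw [Finset.prod_const]
      exact e5
    calc (Hn:ℝ) = ((Hn:ℤ):ℝ) := by push_cast; ring
      _ ≤ (((h:ℤ)^(r^2) : ℤ):ℝ) := by exact_mod_cast e6
      _ = (h:ℝ)^(r^2) := by push_cast; ring
  have hHdvd : ∀ p : {p : Nat.Primes // Real.log h / 2 < ((p : ℕ) : ℝ)},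
      nu (p:ℕ) a ≠ r → (p:ℕ) ∣ Hn := by
    intro p hne
    by_contra hnd
    apply hne
    apply nu_eq_r a
    intro i j hij hdvd'
    apply hnd
    have hdd : ((p:ℕ):ℤ) ∣ ∏ ij ∈ (Finset.univ : Finset (Fin r)).offDiag,
        (a ij.1 - a ij.2) :=
      dvd_trans hdvd' (Finset.dvd_prod_of_mem (f := fun ij : Fin r × Fin r => a ij.1 - a ij.2)
        (a := (i, j)) (Finset.mem_offDiag.mpr ⟨Finset.mem_univ _, Finset.mem_univ _, hij⟩))
    have h9 := Int.natAbs_dvd_natAbs.mpr hdd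
    simpa [hHn] using h9
  set B : Finset ℕ := Hn.primeFactors.filter (fun n => Real.log h / 2 < (n:ℝ)) with hB
  have hBcard : (B.card : ℝ) * Real.log (Real.log h / 2) ≤ (r:ℝ)^2 * Real.log h := by
    have hpr : (∏ n ∈ B, n) ∣ Hn :=
      dvd_trans (Finset.prod_dvd_prod_of_subset _ _ _ (Finset.filter_subset _ _))
        (Nat.prod_primeFactors_dvd Hn)
    have hle : (∏ n ∈ B, n) ≤ Hn := Nat.le_of_dvd (Nat.pos_of_ne_zero hHn0) hpr
    have hyB : (Real.log h / 2)^B.card ≤ ((∏ n ∈ B, n : ℕ):ℝ) := by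
      rw [Nat.cast_prod]
      calc (Real.log h / 2)^B.card = ∏ _n ∈ B, (Real.log h / 2) := by
            rw [Finset.prod_const]
        _ ≤ ∏ n ∈ B, (n:ℝ) := by
            apply Finset.prod_le_prod (fun _ _ => hy0.le)
            intro n hn
            rw [hB, Finset.mem_filter] at hn
            exact hn.2.le
    have hchain : (Real.log h / 2)^B.card ≤ (h:ℝ)^(r^2) := by
      calc (Real.log h / 2)^B.card ≤ ((∏ n ∈ B, n : ℕ):ℝ) := hyB
        _ ≤ (Hn:ℝ) := by exact_mod_cast hle
        _ ≤ (h:ℝ)^(r^2) := hHnle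
    have hlog := Real.log_le_log (pow_pos hy0 _) hchain
    rw [Real.log_pow, Real.log_pow] at hlog
    calc (B.card : ℝ) * Real.log (Real.log h / 2) ≤ ((r^2 : ℕ):ℝ) * Real.log h := hlog
      _ = (r:ℝ)^2 * Real.log h := by push_cast; ring
  set sA : Set {p : Nat.Primes // Real.log h / 2 < ((p : ℕ) : ℝ)} :=
    {p | (p:ℕ) ≤ 2*r+1 ∨ (p:ℕ) ∣ Hn} with hsA
  have hsAfin : sA.Finite := by
    apply Set.Finite.subset (Set.Finite.preimage (vinj.injOn)
      (Finset.finite_toSet (Finset.range (2*r+2) ∪ Hn.divisors)))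
    intro p hp
    simp only [hsA, Set.mem_setOf_eq] at hp
    simp only [Set.mem_preimage, Finset.coe_union, Set.mem_union, Finset.mem_coe,
      Finset.mem_range, Nat.mem_divisors]
    rcases hp with h1 | h2
    · exact Or.inl (by omega)
    · exact Or.inr ⟨h2, hHn0⟩
  haveI : Fintype ↥sA := hsAfin.fintype
  have houtside : ∀ p : {p : Nat.Primes // Real.log h / 2 < ((p : ℕ) : ℝ)},
      p ∉ sA → 2*r+2 ≤ (p:ℕ) ∧ nu (p:ℕ) a = r := by
    intro p hp
    simp only [hsA, Set.mem_setOf_eq, not_or] at hp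
    refine ⟨?_, ?_⟩
    · have h1 := hp.1
      have h2 := hq2 p
      omega
    · by_contra hne
      exact hp.2 (hHdvd p hne)
  have hcompl_bound : ∀ x : ↥sAᶜ,
      |g x.1| ≤ (2*(r:ℝ)^2 * (1/Real.sqrt (Real.log h / 2))) * ((x.1:ℕ):ℝ)^(-(3/2) : ℝ) := by
    rintro ⟨p, hp⟩
    obtain ⟨hx1, hx2⟩ := houtside p hp
    have hgood : |g p| ≤ 2*(r:ℝ)^2/((p:ℕ):ℝ)^2 := by
      rw [hg, hF]
      simp only [hx2]
      exact g_abs_good hx1 hr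
    have hQy : Real.log h / 2 < ((p:ℕ):ℝ) := p.2
    have haux := aux_rpow hy1 hQy
    calc |g p| ≤ 2*(r:ℝ)^2/((p:ℕ):ℝ)^2 := hgood
      _ = 2*(r:ℝ)^2 * (1/((p:ℕ):ℝ)^2) := by ring
      _ ≤ 2*(r:ℝ)^2 * ((1/Real.sqrt (Real.log h / 2)) * ((p:ℕ):ℝ)^(-(3/2) : ℝ)) := by
          apply mul_le_mul_of_nonneg_left haux (by positivity)
      _ = (2*(r:ℝ)^2 * (1/Real.sqrt (Real.log h / 2))) * ((p:ℕ):ℝ)^(-(3/2) : ℝ) := by ring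
  -- summability
  have hrpowI : Summable (fun p : {p : Nat.Primes // Real.log h / 2 < ((p : ℕ) : ℝ)} =>
      ((p:ℕ):ℝ)^(-(3/2) : ℝ)) := Z_summable.comp_injective vinj
  have hrpowC : Summable (fun x : ↥sAᶜ => ((x.1:ℕ):ℝ)^(-(3/2) : ℝ)) :=
    hrpowI.comp_injective Subtype.coe_injective
  have hGsum : Summable (fun x : ↥sAᶜ =>
      (2*(r:ℝ)^2 * (1/Real.sqrt (Real.log h / 2))) * ((x.1:ℕ):ℝ)^(-(3/2) : ℝ)) :=
    hrpowC.mul_left _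
  have habsC : Summable (fun x : ↥sAᶜ => |g x.1|) :=
    Summable.of_nonneg_of_le (fun x => abs_nonneg _) hcompl_bound hGsum
  have habsA : Summable (fun x : ↥sA => |g x.1|) := Summable.of_finite
  have habs : Summable (fun p => |g p|) := summable_subtype_and_compl.mp ⟨habsA, habsC⟩
  have hgsum : Summable g := by
    apply Summable.of_norm
    simpa [Real.norm_eq_abs] using habs
  have htp : (∏' p, F p) = Real.exp (∑' p, g p) := by
    have hS : HasProd (Real.exp ∘ g) (Real.exp (∑' p, g p)) := hgsum.hasSum.rexp
    have hfg : F = Real.exp ∘ g := funext fun p => hFg p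
    rw [hfg]
    exact hS.tprod_eq
  have hT : |∑' p, g p| ≤ ∑' p, |g p| := by
    simpa [Real.norm_eq_abs] using
      norm_tsum_le_tsum_norm (f := g) (by simpa [Real.norm_eq_abs] using habs)
  have hsplit : (∑' p, |g p|) = (∑' x : ↥sA, |g x.1|) + ∑' x : ↥sAᶜ, |g x.1| :=
    (Summable.tsum_add_tsum_compl (f := fun p => |g p|) habsA habsC).symm
  have hfin1 : (∑' x : ↥sA, |g x.1|) = ∑ x ∈ (Finset.univ : Finset ↥sA), |g x.1| := tsum_fintype _
  set u1 : Finset ↥sA := Finset.univ.filter (fun x => (x.1:ℕ) ≤ 2*r+1) with hu1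
  set u2 : Finset ↥sA := Finset.univ.filter (fun x => ¬ (x.1:ℕ) ≤ 2*r+1) with hu2
  have hsum12 : ∑ x ∈ (Finset.univ : Finset ↥sA), |g x.1| = ∑ x ∈ u1, |g x.1| + ∑ x ∈ u2, |g x.1| :=
    (Finset.sum_filter_add_sum_filter_not _ _ _).symm
  have hu1card : u1.card ≤ 2*r+2 := by
    have hcc : u1.card ≤ (Finset.range (2*r+2)).card := by
      apply Finset.card_le_card_of_injOn (fun x : ↥sA => (x.1:ℕ))
      · intro x hx
        rw [Finset.mem_coe, hu1, Finset.mem_filter] at hx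
        exact Finset.mem_range.mpr (by dsimp only; omega)
      · intro x1 _ x2 _ hx
        exact Subtype.ext (vinj hx)
    simpa using hcc
  have hu1term : ∀ x ∈ u1, |g x.1| ≤ 3*(r:ℝ)+1 := by
    intro x hx
    rw [hu1, Finset.mem_filter] at hx
    have hb : |g x.1| ≤ ((x.1:ℕ):ℝ) + r := by
      rw [hg, hF]; exact g_abs_crude (hq2 x.1) (hlt x.1)
    have hcast : ((x.1:ℕ):ℝ) ≤ 2*(r:ℝ)+1 := by exact_mod_cast hx.2
    linarith
  have hsumu1 : ∑ x ∈ u1, |g x.1| ≤ (2*(r:ℝ)+2)*(3*r+1) := by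
    calc ∑ x ∈ u1, |g x.1| ≤ u1.card • (3*(r:ℝ)+1) :=
          Finset.sum_le_card_nsmul _ _ _ hu1term
      _ = (u1.card : ℝ) * (3*r+1) := nsmul_eq_mul _ _
      _ ≤ (2*(r:ℝ)+2)*(3*r+1) := by
          have hcc : (u1.card:ℝ) ≤ 2*(r:ℝ)+2 := by exact_mod_cast hu1card
          nlinarith
  have hlog44 : (0:ℝ) ≤ Real.log (4*(r:ℝ)+4) := Real.log_nonneg (by linarith)
  have hsumu1' : ∑ x ∈ u1, |g x.1|
      ≤ ((2*(r:ℝ)+2)*(3*r+1) * Real.log (4*r+4)) / Real.log (Real.log h) := by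
    rcases Finset.eq_empty_or_nonempty u1 with he | hne
    · rw [he, Finset.sum_empty]
      apply div_nonneg (mul_nonneg (by positivity) hlog44) hL0.le
    · obtain ⟨x, hx⟩ := hne
      rw [hu1, Finset.mem_filter] at hx
      have h1 : Real.log h / 2 < ((x.1:ℕ):ℝ) := x.1.2
      have h2 : ((x.1:ℕ):ℝ) ≤ 2*(r:ℝ)+1 := by exact_mod_cast hx.2
      have h3 : Real.log h < 4*(r:ℝ)+4 := by linarith
      have h4 : Real.log (Real.log h) ≤ Real.log (4*(r:ℝ)+4) :=
        Real.log_le_log (by linarith) h3.le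
      have h5 : 1 ≤ Real.log (4*(r:ℝ)+4) / Real.log (Real.log h) := (one_le_div hL0).mpr h4
      calc ∑ x ∈ u1, |g x.1| ≤ (2*(r:ℝ)+2)*(3*r+1) := hsumu1
        _ ≤ (2*(r:ℝ)+2)*(3*r+1) * (Real.log (4*(r:ℝ)+4) / Real.log (Real.log h)) := by
            nlinarith
        _ = ((2*(r:ℝ)+2)*(3*r+1) * Real.log (4*r+4)) / Real.log (Real.log h) := by ring
  have hu2prop : ∀ x ∈ u2, 2*r+2 ≤ (x.1:ℕ) ∧ (x.1:ℕ) ∣ Hn := by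
    intro x hx
    rw [hu2, Finset.mem_filter] at hx
    have hmem := x.2
    simp only [hsA, Set.mem_setOf_eq] at hmem
    rcases hmem with h1 | h2
    · exact absurd h1 hx.2
    · refine ⟨?_, h2⟩
      have := hx.2
      omega
  have hu2term : ∀ x ∈ u2, |g x.1| ≤ 2*(r:ℝ)/(Real.log h / 2) := by
    intro x hx
    obtain ⟨hx1, _⟩ := hu2prop x hx
    have hb : |g x.1| ≤ 2*(r:ℝ)/((x.1:ℕ):ℝ) := by
      rw [hg, hF]; exact g_abs_bad hx1 (hlt x.1) (nu_le_r _ a) hr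
    have h1 : Real.log h / 2 < ((x.1:ℕ):ℝ) := x.1.2
    have h2 : 2*(r:ℝ)/((x.1:ℕ):ℝ) ≤ 2*(r:ℝ)/(Real.log h / 2) :=
      div_le_div_of_nonneg_left (by positivity) hy0 h1.le
    linarith
  have hu2card : (u2.card : ℝ) ≤ (B.card : ℝ) := by
    have hcard : u2.card ≤ B.card := by
      apply Finset.card_le_card_of_injOn (fun x : ↥sA => (x.1:ℕ))
      · intro x hx
        obtain ⟨hx1, hx2⟩ := hu2prop x hx
        rw [Finset.mem_coe, hB, Finset.mem_filter]
        exact ⟨Nat.mem_primeFactors.mpr ⟨hprime x.1, hx2, hHn0⟩, x.1.2⟩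
      · intro x1 _ x2 _ hx
        exact Subtype.ext (vinj hx)
    exact_mod_cast hcard
  have hsumu2 : ∑ x ∈ u2, |g x.1| ≤ 16*(r:ℝ)^3 / Real.log (Real.log h) := by
    have hstep : ∑ x ∈ u2, |g x.1| ≤ (u2.card : ℝ) * (2*(r:ℝ)/(Real.log h / 2)) := by
      calc ∑ x ∈ u2, |g x.1| ≤ u2.card • (2*(r:ℝ)/(Real.log h / 2)) :=
            Finset.sum_le_card_nsmul _ _ _ hu2term
        _ = (u2.card : ℝ) * (2*(r:ℝ)/(Real.log h / 2)) := nsmul_eq_mul _ _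
    have hB0 : (0:ℝ) ≤ (B.card:ℝ) := Nat.cast_nonneg _
    have hy2 : (0:ℝ) ≤ 2*(r:ℝ)/(Real.log h / 2) := by positivity
    have hstep2 : (u2.card : ℝ) * (2*(r:ℝ)/(Real.log h / 2))
        ≤ (B.card : ℝ) * (2*(r:ℝ)/(Real.log h / 2)) :=
      mul_le_mul_of_nonneg_right hu2card hy2
    have k0 : (0:ℝ) ≤ (B.card:ℝ)*(4*(r:ℝ)) := mul_nonneg hB0 (by linarith)
    have k1 : (B.card:ℝ)*(4*(r:ℝ))*Real.log (Real.log h)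
        ≤ (B.card:ℝ)*(4*(r:ℝ))*(4*Real.log (Real.log h / 2)) :=
      mul_le_mul_of_nonneg_left hL4y k0
    have k2 : 16*(r:ℝ)*((B.card:ℝ)*Real.log (Real.log h / 2))
        ≤ 16*(r:ℝ)*((r:ℝ)^2*Real.log h) :=
      mul_le_mul_of_nonneg_left hBcard (by positivity)
    have k3 : (B.card:ℝ)*(4*(r:ℝ))*Real.log (Real.log h) ≤ 16*(r:ℝ)^3*Real.log h := by
      nlinarith
    have e : (B.card:ℝ) * (2*(r:ℝ)/(Real.log h/2)) = ((B.card:ℝ)*(4*(r:ℝ)))/Real.log h := by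
      rw [div_div_eq_mul_div]
      ring
    calc ∑ x ∈ u2, |g x.1| ≤ (B.card : ℝ) * (2*(r:ℝ)/(Real.log h / 2)) :=
          le_trans hstep hstep2
      _ = ((B.card:ℝ)*(4*(r:ℝ)))/Real.log h := e
      _ ≤ 16*(r:ℝ)^3 / Real.log (Real.log h) := by
          rw [div_le_div_iff₀ (by linarith) hL0]
          linarith [k3]
  have hsumC : (∑' x : ↥sAᶜ, |g x.1|) ≤ 6*(r:ℝ)^2*Z / Real.log (Real.log h) := by
    have t1 : (∑' x : ↥sAᶜ, |g x.1|) ≤ ∑' x : ↥sAᶜ,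
        (2*(r:ℝ)^2 * (1/Real.sqrt (Real.log h / 2))) * ((x.1:ℕ):ℝ)^(-(3/2) : ℝ) :=
      Summable.tsum_le_tsum hcompl_bound habsC hGsum
    have t2 : (∑' x : ↥sAᶜ, (2*(r:ℝ)^2 * (1/Real.sqrt (Real.log h / 2)))
          * ((x.1:ℕ):ℝ)^(-(3/2) : ℝ))
        = (2*(r:ℝ)^2 * (1/Real.sqrt (Real.log h / 2)))
          * ∑' x : ↥sAᶜ, ((x.1:ℕ):ℝ)^(-(3/2) : ℝ) := tsum_mul_left
    have t3 : (∑' x : ↥sAᶜ, ((x.1:ℕ):ℝ)^(-(3/2) : ℝ)) ≤ Z :=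
      Summable.tsum_le_tsum_of_inj (fun x : ↥sAᶜ => (x.1:ℕ))
        (fun x1 x2 hx => Subtype.ext (vinj hx))
        (fun n _ => Real.rpow_nonneg (Nat.cast_nonneg n) _)
        (fun x => le_rfl) hrpowC Z_summable
    have hsy : 0 < Real.sqrt (Real.log h / 2) := Real.sqrt_pos.mpr hy0
    have hinv : 1/Real.sqrt (Real.log h / 2) ≤ 3/Real.log (Real.log h) := by
      rw [div_le_div_iff₀ hsy hL0]
      linarith
    have hZ := Z_nonneg
    have htsum0 : (0:ℝ) ≤ ∑' x : ↥sAᶜ, ((x.1:ℕ):ℝ)^(-(3/2) : ℝ) :=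
      tsum_nonneg (fun x => Real.rpow_nonneg (Nat.cast_nonneg _) _)
    calc (∑' x : ↥sAᶜ, |g x.1|)
        ≤ ∑' x : ↥sAᶜ, (2*(r:ℝ)^2 * (1/Real.sqrt (Real.log h / 2)))
            * ((x.1:ℕ):ℝ)^(-(3/2) : ℝ) := t1
      _ = (2*(r:ℝ)^2 * (1/Real.sqrt (Real.log h / 2)))
            * ∑' x : ↥sAᶜ, ((x.1:ℕ):ℝ)^(-(3/2) : ℝ) := t2
      _ ≤ (2*(r:ℝ)^2 * (3/Real.log (Real.log h))) * Z := by
          apply mul_le_mul (mul_le_mul_of_nonneg_left hinv (by positivity)) t3 htsum0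
            (by positivity)
      _ = 6*(r:ℝ)^2*Z / Real.log (Real.log h) := by ring
  have hTbound : (∑' p, |g p|) ≤ K r / Real.log (Real.log h) := by
    calc (∑' p, |g p|)
        = (∑ x ∈ u1, |g x.1| + ∑ x ∈ u2, |g x.1|) + ∑' x : ↥sAᶜ, |g x.1| := by
          rw [hsplit, hfin1, hsum12]
      _ ≤ (((2*(r:ℝ)+2)*(3*r+1) * Real.log (4*r+4)) / Real.log (Real.log h)
            + 16*(r:ℝ)^3 / Real.log (Real.log h))
            + 6*(r:ℝ)^2*Z / Real.log (Real.log h) :=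
          add_le_add (add_le_add hsumu1' hsumu2) hsumC
      _ = K r / Real.log (Real.log h) := by
          rw [← add_div, ← add_div]
          congr 1
  have hS1 : |∑' p, g p| ≤ K r / Real.log (Real.log h) := le_trans hT hTbound
  have hS2 : |∑' p, g p| ≤ K r := le_trans hS1 (div_le_self (K_nonneg r) hL1)
  rw [htp]
  calc |Real.exp (∑' p, g p) - 1| ≤ |∑' p, g p| * Real.exp |∑' p, g p| := aux_exp_bound _
    _ ≤ (K r / Real.log (Real.log h)) * Real.exp (K r) := by
        apply mul_le_mul hS1 (Real.exp_le_exp.mpr hS2) (Real.exp_pos _).le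
          (div_nonneg (K_nonneg r) hL0.le)
    _ = Real.exp (K r) * K r / Real.log (Real.log h) := by ring

open TailAux in
/-- With `y = (1/2) log h`, for distinct integers `0 ≤ h₁,…,h_r ≤ h`, the tail
product `∏_{p > y} (1 - ν_p(h)/p)(1 - 1/p)^{-r}` is `1 + O(1/log log h)`,
uniformly in the tuple. -/
theorem tail_product_estimate (r : ℕ) :
    ∃ C : ℝ, 0 < C ∧ ∀ h : ℕ, 16 ≤ h → ∀ a : Fin r → ℤ,
      (∀ i, a i ∈ Finset.Icc (0:ℤ) (h:ℤ)) →
      (∀ i j : Fin r, i ≠ j → a i ≠ a j) →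
      |(∏' p : {p : Nat.Primes // Real.log h / 2 < ((p : ℕ) : ℝ)},
          ((1 - (nu (p : ℕ) a : ℝ) / ((p : ℕ) : ℝ)) * ((1 - 1 / ((p : ℕ) : ℝ))⁻¹) ^ r))
        - 1| ≤ C / Real.log (Real.log h) := by
  classical
  have hr0' : (0:ℝ) ≤ (r:ℝ) := Nat.cast_nonneg r
  have hCnn : 0 ≤ Real.exp (K r) * K r := mul_nonneg (Real.exp_pos _).le (K_nonneg r)
  have hlog2r : 0 ≤ Real.log (2*(r:ℝ)+2) := Real.log_nonneg (by linarith)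
  refine ⟨Real.exp (K r) * K r + Real.log (2*(r:ℝ)+2) + 2, by linarith, ?_⟩
  intro h h16 a ha hdist
  have hh16 : (16:ℝ) ≤ (h:ℝ) := by exact_mod_cast h16
  have hlogh : (2.772:ℝ) ≤ Real.log h := by
    have h0 : Real.log 16 ≤ Real.log h := Real.log_le_log (by norm_num) hh16
    have h1 : Real.log 16 = 4 * Real.log 2 := by
      rw [show (16:ℝ) = 2^4 by norm_num, Real.log_pow]; norm_num
    have := Real.log_two_gt_d9
    linarith
  obtain ⟨hL1, hly0, hL4y, hLsq⟩ := aux_numerics hlogh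
  have hL0 : 0 < Real.log (Real.log h) := by linarith
  rcases Nat.eq_zero_or_pos r with hr0 | hrpos
  · subst hr0
    have hone : (fun p : {p : Nat.Primes // Real.log h / 2 < ((p:ℕ):ℝ)} =>
        ((1 - (nu (p : ℕ) a : ℝ) / ((p : ℕ) : ℝ)) * ((1 - 1 / ((p : ℕ) : ℝ))⁻¹) ^ 0))
        = fun _ => (1:ℝ) := by
      funext p
      have hnu0 : nu (p:ℕ) a = 0 := by
        rw [nu]
        simp
      rw [hnu0]
      simp
    rw [hone, tprod_one]
    simp only [sub_self, abs_zero]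
    positivity
  · by_cases hz : ∃ p : {p : Nat.Primes // Real.log h / 2 < ((p:ℕ):ℝ)},
      nu (p:ℕ) a = (p:ℕ)
    · obtain ⟨p₀, hp₀⟩ := hz
      have hq2 : 2 ≤ (p₀:ℕ) := (p₀.1.2).two_le
      have hq0 : ((p₀:ℕ):ℝ) ≠ 0 := by
        have : (2:ℝ) ≤ ((p₀:ℕ):ℝ) := by exact_mod_cast hq2
        linarith
      have hf0 : ((1 - (nu (p₀ : ℕ) a : ℝ) / ((p₀ : ℕ) : ℝ))
          * ((1 - 1 / ((p₀ : ℕ) : ℝ))⁻¹) ^ r) = 0 := by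
        rw [hp₀, div_self hq0, sub_self, zero_mul]
      have hzero : HasProd (fun p : {p : Nat.Primes // Real.log h / 2 < ((p:ℕ):ℝ)} =>
          ((1 - (nu (p : ℕ) a : ℝ) / ((p : ℕ) : ℝ)) * ((1 - 1 / ((p : ℕ) : ℝ))⁻¹) ^ r)) 0 := by
        rw [HasProd]
        apply Filter.Tendsto.congr' _ tendsto_const_nhds
        filter_upwards [Filter.eventually_ge_atTop ({p₀} : Finset _)] with s hs
        exact (Finset.prod_eq_zero (hs (Finset.mem_singleton_self p₀)) hf0).symm
      rw [hzero.tprod_eq]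
      have hqr : (p₀:ℕ) ≤ r := hp₀ ▸ nu_le_r (p₀:ℕ) a
      have hyq : Real.log h / 2 < ((p₀:ℕ):ℝ) := p₀.2
      have hrr : ((p₀:ℕ):ℝ) ≤ (r:ℝ) := by exact_mod_cast hqr
      have hlogh2r : Real.log h < 2*(r:ℝ)+2 := by linarith
      have hLle : Real.log (Real.log h) ≤ Real.log (2*(r:ℝ)+2) :=
        Real.log_le_log (by linarith) hlogh2r.le
      have habs1 : |(0:ℝ) - 1| = (1:ℝ) := by norm_num
      rw [habs1, le_div_iff₀ hL0]
      linarith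
    · push_neg at hz
      have hlt : ∀ p : {p : Nat.Primes // Real.log h / 2 < ((p:ℕ):ℝ)},
          nu (p:ℕ) a < (p:ℕ) := fun p => lt_of_le_of_ne (nu_le_p p.1.2 a) (hz p)
      refine le_trans (tail_core r hrpos h h16 a ha hdist hlt) ?_
      rw [div_le_div_iff₀ hL0 hL0]
      nlinarith
end

section
/- For a squarefree positive integer P and integers h₁,…,h_r, the sum over all tuples 0 ≤ h₁,…,h_r ≤ h of ∏_{p|P}(1 - ν_p(h)/p) equals h^r ∏_{p|P}(1 - 1/p)^r + O(h^{r-1} P · ∏_{p|P}(1 + 1/p)^r), with implied constant depending only on r. -/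
open Finset

set_option maxHeartbeats 1000000

lemma count_Ico_mul (n k : ℕ) [NeZero n] (Q : ZMod n → Prop) [DecidablePred Q] :
    ((Finset.Ico (0:ℤ) ((k*n : ℕ) : ℤ)).filter (fun t : ℤ => Q (t : ZMod n))).card
      = k * (Finset.univ.filter Q).card := by
  have hn : 0 < n := Nat.pos_of_ne_zero (NeZero.ne n)
  have : k * (Finset.univ.filter Q).card
      = ((Finset.range k) ×ˢ (Finset.univ.filter Q)).card := by
    simp [Finset.card_product]
  rw [this]
  apply Finset.card_bij' (fun t _ => ((t / (n:ℤ)).toNat, ((t : ZMod n))))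
    (fun b _ => (b.1 : ℤ) * n + ((b.2.val : ℤ)))
  · intro t ht
    simp only [Finset.mem_filter, Finset.mem_Ico] at ht
    obtain ⟨⟨ht0, htk⟩, hQ⟩ := ht
    simp only [Finset.mem_product, Finset.mem_range, Finset.mem_filter, Finset.mem_univ,
      true_and]
    refine ⟨?_, hQ⟩
    have h1 : t / (n:ℤ) < k := by
      rw [Int.ediv_lt_iff_lt_mul (by exact_mod_cast hn)]
      push_cast at htk ⊢
      linarith
    have h0 : 0 ≤ t / (n:ℤ) := Int.ediv_nonneg ht0 (by positivity)
    omega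
  · intro b hb
    simp only [Finset.mem_product, Finset.mem_range, Finset.mem_filter, Finset.mem_univ,
      true_and] at hb
    obtain ⟨hb1, hb2⟩ := hb
    have hval : b.2.val < n := ZMod.val_lt b.2
    simp only [Finset.mem_filter, Finset.mem_Ico]
    constructor
    · constructor
      · positivity
      · have h2 : ((b.1:ℤ) + 1) * n ≤ (k:ℤ) * n := by
          have : (b.1:ℤ) + 1 ≤ k := by exact_mod_cast hb1
          nlinarith [Int.natCast_pos.mpr hn]
        have h3 : (b.1 : ℤ) * n + b.2.val < ((b.1:ℤ) + 1) * n := by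
          have : (b.2.val : ℤ) < n := by exact_mod_cast hval
          nlinarith
        push_cast
        linarith
    · have h4 : (((b.1 : ℤ) * n + (b.2.val : ℤ) : ℤ) : ZMod n) = b.2 := by
        push_cast
        simp [ZMod.natCast_self, ZMod.natCast_val, ZMod.cast_id]
      rw [h4]; exact hb2
  · intro t ht
    simp only [Finset.mem_filter, Finset.mem_Ico] at ht
    obtain ⟨⟨ht0, htk⟩, _⟩ := ht
    have h0 : 0 ≤ t / (n:ℤ) := Int.ediv_nonneg ht0 (by positivity)
    rw [Int.toNat_of_nonneg h0, ZMod.val_intCast]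
    rw [mul_comm]
    exact Int.mul_ediv_add_emod t n
  · intro b hb
    have hval : b.2.val < n := ZMod.val_lt b.2
    have h1 : ((b.1 : ℤ) * n + (b.2.val : ℤ)) / n = b.1 := by
      rw [show (b.1 : ℤ) * n + (b.2.val : ℤ) = (b.2.val : ℤ) + b.1 * n by ring,
        Int.add_mul_ediv_right _ _ (by exact_mod_cast hn.ne' : (n:ℤ) ≠ 0),
        Int.ediv_eq_zero_of_lt (by positivity) (by exact_mod_cast hval), zero_add]
    have h2 : (((b.1 : ℤ) * n + (b.2.val : ℤ) : ℤ) : ZMod n) = b.2 := by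
      push_cast
      simp [ZMod.natCast_self, ZMod.natCast_val, ZMod.cast_id]
    rw [Prod.mk.injEq]
    exact ⟨by rw [h1]; simp, h2⟩

lemma count_avoid (s : Finset ℕ) (hs : ∀ p ∈ s, p.Prime) (g : ∀ p ∈ s, ZMod p) (k : ℕ) :
    ((Finset.Ico (0:ℤ) ((k * ∏ p ∈ s, p : ℕ) : ℤ)).filter
      (fun t : ℤ => ∀ p (hp : p ∈ s), (t : ZMod p) ≠ g p hp)).card
    = k * ∏ p ∈ s, (p - 1) := by
  classical
  set a : {x // x ∈ s} → ℕ := fun i => (i : ℕ) with ha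
  have copr : Pairwise (Function.onFun Nat.Coprime a) := by
    intro i j hij
    exact (Nat.coprime_primes (hs i i.2) (hs j j.2)).mpr
      (fun h => hij (Subtype.ext h))
  set e := ZMod.prodEquivPi a copr with he
  have hprod : (∏ i, a i) = ∏ p ∈ s, p := by
    show (∏ i : {x // x ∈ s}, ((i : ℕ))) = _
    exact Finset.prod_coe_sort s (fun p => p)
  haveI : NeZero (∏ i, a i) := ⟨by
    have : 0 < ∏ i, a i := Finset.prod_pos (fun i _ => (hs i i.2).pos)
    omega⟩
  set Q : ZMod (∏ i, a i) → Prop := fun x => ∀ i : {x // x ∈ s}, e x i ≠ g i i.2 with hQ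
  have key : ∀ t : ℤ, (∀ p (hp : p ∈ s), (t : ZMod p) ≠ g p hp) ↔ Q ((t : ZMod (∏ i, a i))) := by
    intro t
    have hcast : ∀ i : {x // x ∈ s}, e ((t : ZMod (∏ i, a i))) i = (t : ZMod i) := by
      intro i
      rw [map_intCast e t, Pi.intCast_apply]
    constructor
    · intro H i; rw [hcast i]; exact H i i.2
    · intro H p hp; have := H ⟨p, hp⟩; rwa [hcast ⟨p, hp⟩] at this
  rw [show ((k * ∏ p ∈ s, p : ℕ) : ℤ) = ((k * ∏ i, a i : ℕ) : ℤ) by rw [hprod]]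
  have h1 : ((Finset.Ico (0:ℤ) ((k * ∏ i, a i : ℕ) : ℤ)).filter
      (fun t : ℤ => ∀ p (hp : p ∈ s), (t : ZMod p) ≠ g p hp)).card
      = ((Finset.Ico (0:ℤ) ((k * ∏ i, a i : ℕ) : ℤ)).filter
      (fun t : ℤ => Q ((t : ZMod (∏ i, a i))))).card := by
    congr 1
    apply Finset.filter_congr
    intro t _
    exact key t
  rw [h1, count_Ico_mul (∏ i, a i) k Q]
  congr 1
  -- card of filter Q = ∏ (p-1)
  have h2 : (Finset.univ.filter Q).card = Fintype.card {x // Q x} :=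
    (Fintype.card_subtype Q).symm
  rw [h2]
  haveI : ∀ i : {x // x ∈ s}, NeZero (a i) := fun i => ⟨(hs i i.2).pos.ne'⟩
  have e1 : {x // Q x} ≃ {y : ∀ i : {x // x ∈ s}, ZMod (a i) // ∀ i, y i ≠ g i i.2} :=
    e.toEquiv.subtypeEquiv (fun x => Iff.rfl)
  have e2 : {y : ∀ i : {x // x ∈ s}, ZMod (a i) // ∀ i, y i ≠ g i i.2}
      ≃ ∀ i : {x // x ∈ s}, {z : ZMod (a i) // z ≠ g i i.2} :=
    Equiv.subtypePiEquivPi (p := fun (i : {x // x ∈ s}) (z : ZMod (a i)) => z ≠ g i i.2)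
  rw [Fintype.card_congr (e1.trans e2), Fintype.card_pi]
  have h3 : ∀ i : {x // x ∈ s}, Fintype.card {z : ZMod (a i) // z ≠ g i i.2} = (i : ℕ) - 1 := by
    intro i
    haveI : NeZero (a i) := ⟨(hs i i.2).pos.ne'⟩
    rw [Fintype.card_subtype]
    rw [Finset.filter_ne', Finset.card_erase_of_mem (Finset.mem_univ _), Finset.card_univ,
      ZMod.card]
  rw [Finset.prod_congr rfl (fun i _ => h3 i)]
  exact Finset.prod_coe_sort s (fun p => p - 1)

def zuniv (p : ℕ) : Finset (ZMod p) := (Finset.range p).image (Nat.cast)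

lemma zuniv_eq (p : ℕ) [NeZero p] : zuniv p = Finset.univ := by
  apply Finset.eq_univ_of_forall
  intro x
  exact Finset.mem_image.mpr ⟨x.val, Finset.mem_range.mpr (ZMod.val_lt x),
    by simp [ZMod.natCast_val, ZMod.cast_id]⟩

lemma sum_transform (r : ℕ) (s : Finset ℕ) (hs : ∀ p ∈ s, p.Prime) (h : ℕ) :
    ∑ a ∈ Fintype.piFinset (fun _ : Fin r => Finset.Icc (0:ℤ) (h:ℤ)),
        ∏ p ∈ s, (1 - (nu p a : ℝ) / (p : ℝ))
    = ∑ g ∈ s.pi (fun p => zuniv p),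
        (((Finset.Icc (0:ℤ) (h:ℤ)).filter
            (fun t : ℤ => ∀ p (hp : p ∈ s), (t : ZMod p) ≠ g p hp)).card : ℝ)^r
          / (∏ p ∈ s, (p:ℝ)) := by
  classical
  -- Step A: each factor as a count
  have stepA : ∀ a : Fin r → ℤ, ∏ p ∈ s, (1 - (nu p a : ℝ) / (p : ℝ))
      = (∏ p ∈ s, ∑ x ∈ zuniv p, ∏ i : Fin r,
          (if (a i : ZMod p) ≠ x then (1:ℝ) else 0)) / ∏ p ∈ s, (p:ℝ) := by
    intro a
    rw [← Finset.prod_div_distrib]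
    apply Finset.prod_congr rfl
    intro p hp
    haveI : NeZero p := ⟨(hs p hp).pos.ne'⟩
    have hcard : ∑ x ∈ zuniv p, ∏ i : Fin r, (if (a i : ZMod p) ≠ x then (1:ℝ) else 0)
        = ((Finset.univ.filter (fun x : ZMod p => ∀ i, (a i : ZMod p) ≠ x)).card : ℝ) := by
      rw [zuniv_eq p]
      rw [← Finset.sum_boole]
      apply Finset.sum_congr rfl
      intro x _
      rw [Finset.prod_boole]
      simp
    rw [hcard]
    have hset : (Finset.univ.filter (fun x : ZMod p => ∀ i, (a i : ZMod p) ≠ x))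
        = Finset.univ \ (Finset.univ.image (fun i => ((a i : ZMod p)))) := by
      ext x
      simp [eq_comm]
    have hnu : nu p a ≤ p := by
      calc nu p a ≤ Fintype.card (ZMod p) := Finset.card_le_univ _
        _ = p := ZMod.card p
    rw [hset, Finset.card_sdiff_of_subset (Finset.subset_univ _), Finset.card_univ, ZMod.card]
    have hnu' : nu p a = (Finset.univ.image (fun i => ((a i : ZMod p)))).card := rfl
    rw [← hnu', Nat.cast_sub hnu]
    have hp0 : (p : ℝ) ≠ 0 := Nat.cast_ne_zero.mpr (hs p hp).pos.ne'
    field_simp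
  -- rewrite each summand, then swap everything
  calc ∑ a ∈ Fintype.piFinset (fun _ : Fin r => Finset.Icc (0:ℤ) (h:ℤ)),
        ∏ p ∈ s, (1 - (nu p a : ℝ) / (p : ℝ))
      = ∑ a ∈ Fintype.piFinset (fun _ : Fin r => Finset.Icc (0:ℤ) (h:ℤ)),
        (∑ g ∈ s.pi (fun p => zuniv p), ∏ i : Fin r, ∏ p' ∈ s.attach,
          (if (a i : ZMod p'.1) ≠ g p'.1 p'.2 then (1:ℝ) else 0)) / ∏ p ∈ s, (p:ℝ) := by
        apply Finset.sum_congr rfl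
        intro a _
        rw [stepA a, Finset.prod_sum]
        congr 1
        apply Finset.sum_congr rfl
        intro g _
        rw [Finset.prod_comm]
    _ = (∑ g ∈ s.pi (fun p => zuniv p), ∑ a ∈ Fintype.piFinset (fun _ : Fin r => Finset.Icc (0:ℤ) (h:ℤ)),
          ∏ i : Fin r, ∏ p' ∈ s.attach,
          (if (a i : ZMod p'.1) ≠ g p'.1 p'.2 then (1:ℝ) else 0)) / ∏ p ∈ s, (p:ℝ) := by
        rw [← Finset.sum_div, Finset.sum_comm]
    _ = ∑ g ∈ s.pi (fun p => zuniv p),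
        (((Finset.Icc (0:ℤ) (h:ℤ)).filter
            (fun t : ℤ => ∀ p (hp : p ∈ s), (t : ZMod p) ≠ g p hp)).card : ℝ)^r
          / (∏ p ∈ s, (p:ℝ)) := by
        rw [Finset.sum_div]
        apply Finset.sum_congr rfl
        intro g _
        congr 1
        have hpu := Finset.prod_univ_sum (fun _ : Fin r => Finset.Icc (0:ℤ) (h:ℤ))
          (fun i t => ∏ p' ∈ s.attach, (if (t : ZMod p'.1) ≠ g p'.1 p'.2 then (1:ℝ) else 0))
        rw [← hpu]
        have hW : ∀ i : Fin r, ∑ t ∈ Finset.Icc (0:ℤ) (h:ℤ), ∏ p' ∈ s.attach,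
            (if (t : ZMod p'.1) ≠ g p'.1 p'.2 then (1:ℝ) else 0)
            = (((Finset.Icc (0:ℤ) (h:ℤ)).filter
            (fun t : ℤ => ∀ p (hp : p ∈ s), (t : ZMod p) ≠ g p hp)).card : ℝ) := by
          intro i
          rw [← Finset.sum_boole]
          apply Finset.sum_congr rfl
          intro t _
          rw [Finset.prod_boole]
          congr 1
          simp only [eq_iff_iff]
          constructor
          · intro H p hp; exact H ⟨p, hp⟩ (Finset.mem_attach _ _)
          · intro H p' _; exact H p'.1 p'.2
        rw [Finset.prod_congr rfl (fun i _ => hW i), Finset.prod_const,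
          Finset.card_univ, Fintype.card_fin]

lemma abs_pow_sub_pow_le' (M x y : ℝ) (hx0 : 0 ≤ x) (hx : x ≤ M) (hy0 : 0 ≤ y) (hy : y ≤ M) :
    ∀ k : ℕ, |x^(k+1) - y^(k+1)| ≤ (k+1 : ℝ) * M^k * |x - y| := by
  intro k; induction k with
  | zero => simp
  | succ n ih =>
    have hM : 0 ≤ M := le_trans hx0 hx
    have key : x^(n+2) - y^(n+2) = x * (x^(n+1) - y^(n+1)) + y^(n+1) * (x - y) := by ring
    calc |x^(n+1+1) - y^(n+1+1)| = |x * (x^(n+1) - y^(n+1)) + y^(n+1) * (x - y)| := by rw [key]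
      _ ≤ |x * (x^(n+1) - y^(n+1))| + |y^(n+1) * (x - y)| := abs_add_le _ _
      _ = x * |x^(n+1) - y^(n+1)| + y^(n+1) * |x - y| := by
          rw [abs_mul, abs_mul, abs_of_nonneg hx0, abs_of_nonneg (pow_nonneg hy0 _)]
      _ ≤ M * ((n+1 : ℝ) * M^n * |x - y|) + M^(n+1) * |x - y| := by
          gcongr
      _ = (n+1+1 : ℝ) * M^(n+1) * |x - y| := by ring
      _ = ((n+1 : ℕ) + 1 : ℝ) * M^(n+1) * |x - y| := by push_cast; ring

/-- For squarefree `P` the sum over all tuples `0 ≤ h₁,…,h_r ≤ h` of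
`∏_{p|P}(1 - ν_p(h)/p)` equals `h^r ∏_{p|P}(1-1/p)^r` up to an error
`O(h^{r-1} P ∏_{p|P}(1+1/p)^r)`, with constant depending only on `r`. -/
theorem sum_over_all_tuples (r : ℕ) (hr : 1 ≤ r) :
    ∃ C : ℝ, 0 < C ∧ ∀ P : ℕ, 0 < P → Squarefree P → ∀ h : ℕ, 1 ≤ h →
      |(∑ a ∈ Fintype.piFinset (fun _ : Fin r => Finset.Icc (0:ℤ) (h:ℤ)),
          ∏ p ∈ P.primeFactors, (1 - (nu p a : ℝ) / (p : ℝ)))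
        - (h : ℝ) ^ r * ∏ p ∈ P.primeFactors, (1 - 1 / (p : ℝ)) ^ r|
      ≤ C * (h : ℝ) ^ (r - 1) * P * ∏ p ∈ P.primeFactors, (1 + 1 / (p : ℝ)) ^ r := by
  obtain ⟨k, rfl⟩ : ∃ k, r = k + 1 := ⟨r - 1, (Nat.succ_pred_eq_of_pos hr).symm⟩
  refine ⟨((k:ℝ)+1) * 2^(k+1), by positivity, ?_⟩
  intro P hP hsf h hh
  classical
  set s := P.primeFactors with hs_def
  have hs : ∀ p ∈ s, p.Prime := fun p hp => Nat.prime_of_mem_primeFactors hp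
  have hsP : ∏ p ∈ s, p = P := Nat.prod_primeFactors_of_squarefree hsf
  rw [sum_transform (k+1) s hs h]
  set N : ℕ := ∏ p ∈ s, (p - 1) with hN_def
  set q : ℕ := (h+1)/P with hq_def
  have hP0 : (0:ℝ) < P := by exact_mod_cast hP
  have hP1 : (1:ℝ) ≤ P := by exact_mod_cast hP
  have hh1 : (1:ℝ) ≤ h := by exact_mod_cast hh
  have hN0 : (0:ℝ) ≤ N := Nat.cast_nonneg N
  have hNP : (N:ℝ) ≤ P := by
    have : N ≤ P := by
      rw [← hsP]
      exact Finset.prod_le_prod' (fun p _ => Nat.sub_le p 1)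
    exact_mod_cast this
  have hIcc : Finset.Icc (0:ℤ) (h:ℤ) = Finset.Ico (0:ℤ) (((h+1:ℕ)) : ℤ) := by
    ext t
    simp only [Finset.mem_Icc, Finset.mem_Ico]
    push_cast
    omega
  have hqP1 : q * P ≤ h + 1 := by rw [hq_def]; exact Nat.div_mul_le_self _ _
  have hqP2 : h + 1 ≤ (q + 1) * P := by
    rw [hq_def, add_mul, one_mul]
    exact (Nat.lt_div_mul_add hP).le
  have hq1 : (q:ℝ) * P ≤ (h:ℝ) + 1 := by exact_mod_cast hqP1
  have hq2 : (h:ℝ) + 1 ≤ ((q:ℝ) + 1) * P := by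
    have : ((h:ℝ)) + 1 ≤ ((q + 1 : ℕ) : ℝ) * P := by exact_mod_cast hqP2
    push_cast at this
    linarith
  -- bounds on the counts
  have hbounds : ∀ g ∈ s.pi (fun p => zuniv p),
      (q * N ≤ ((Finset.Icc (0:ℤ) (h:ℤ)).filter
        (fun t : ℤ => ∀ p (hp : p ∈ s), (t : ZMod p) ≠ g p hp)).card
      ∧ ((Finset.Icc (0:ℤ) (h:ℤ)).filter
        (fun t : ℤ => ∀ p (hp : p ∈ s), (t : ZMod p) ≠ g p hp)).card ≤ (q+1) * N) := by
    intro g _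
    have h1 := count_avoid s hs g q
    have h2 := count_avoid s hs g (q+1)
    rw [hsP] at h1 h2
    constructor
    · rw [← h1]
      apply Finset.card_le_card
      apply Finset.filter_subset_filter
      rw [hIcc]
      apply Finset.Ico_subset_Ico le_rfl
      exact_mod_cast hqP1
    · rw [← h2]
      apply Finset.card_le_card
      apply Finset.filter_subset_filter
      rw [hIcc]
      apply Finset.Ico_subset_Ico le_rfl
      exact_mod_cast hqP2
  have hcard_filter : ∀ g ∈ s.pi (fun p => zuniv p),
      ((Finset.Icc (0:ℤ) (h:ℤ)).filter
        (fun t : ℤ => ∀ p (hp : p ∈ s), (t : ZMod p) ≠ g p hp)).card ≤ h + 1 := by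
    intro g _
    calc ((Finset.Icc (0:ℤ) (h:ℤ)).filter _).card ≤ (Finset.Icc (0:ℤ) (h:ℤ)).card :=
          Finset.card_filter_le _ _
      _ = h + 1 := by rw [Int.card_Icc]; omega
  have hcard_pi : (s.pi (fun p => zuniv p)).card = P := by
    rw [Finset.card_pi, ← hsP]
    apply Finset.prod_congr rfl
    intro p hp
    haveI : NeZero p := ⟨(hs p hp).pos.ne'⟩
    rw [zuniv_eq p, Finset.card_univ, ZMod.card]
  have hp_cast : (∏ p ∈ s, (p:ℝ)) = (P:ℝ) := by rw [← Nat.cast_prod, hsP]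
  have hprod_main : ∏ p ∈ s, (1 - 1/(p:ℝ)) = (N:ℝ)/(P:ℝ) := by
    have hfac : ∀ p ∈ s, (1 - 1/(p:ℝ)) = ((p-1 : ℕ) : ℝ)/(p:ℝ) := by
      intro p hp
      have h1 : (1:ℕ) ≤ p := (hs p hp).pos
      have hp0 : (p:ℝ) ≠ 0 := Nat.cast_ne_zero.mpr (hs p hp).pos.ne'
      rw [Nat.cast_sub h1]
      push_cast
      field_simp
    rw [Finset.prod_congr rfl hfac, Finset.prod_div_distrib, ← Nat.cast_prod, ← Nat.cast_prod,
      hsP, hN_def]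
  -- the common main-term value
  set y : ℝ := (h:ℝ) * N / P with hy_def
  have hy0 : 0 ≤ y := by positivity
  have hyM : y ≤ 2 * h := by
    rw [hy_def]
    rw [div_le_iff₀ hP0]
    nlinarith
  have hmain : (h:ℝ)^(k+1) * ∏ p ∈ s, (1 - 1/(p:ℝ))^(k+1)
      = ∑ _g ∈ s.pi (fun p => zuniv p), y^(k+1) / P := by
    rw [Finset.sum_const, hcard_pi, nsmul_eq_mul, Finset.prod_pow, hprod_main, hy_def]
    rw [mul_div_assoc, ← mul_pow]
    field_simp
  rw [hmain, hp_cast, ← Finset.sum_sub_distrib]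
  -- per-term estimate
  have hterm : ∀ g ∈ s.pi (fun p => zuniv p),
      |((((Finset.Icc (0:ℤ) (h:ℤ)).filter
          (fun t : ℤ => ∀ p (hp : p ∈ s), (t : ZMod p) ≠ g p hp)).card : ℝ))^(k+1) / P
        - y^(k+1) / P|
      ≤ ((k:ℝ)+1) * 2^(k+1) * (h:ℝ)^k * P / P := by
    intro g hg
    obtain ⟨hb1, hb2⟩ := hbounds g hg
    set x : ℝ := (((Finset.Icc (0:ℤ) (h:ℤ)).filter
        (fun t : ℤ => ∀ p (hp : p ∈ s), (t : ZMod p) ≠ g p hp)).card : ℝ) with hx_def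
    have hx0 : 0 ≤ x := Nat.cast_nonneg _
    have hx1 : (q:ℝ) * N ≤ x := by
      rw [hx_def]
      exact_mod_cast hb1
    have hx2 : x ≤ ((q:ℝ) + 1) * N := by
      rw [hx_def]
      have : (((q+1) * N : ℕ) : ℝ) = ((q:ℝ)+1) * N := by push_cast; ring
      rw [← this]
      exact_mod_cast hb2
    have hxM : x ≤ 2 * h := by
      have h1 : x ≤ (h:ℝ) + 1 := by
        rw [hx_def]
        exact_mod_cast hcard_filter g hg
      linarith
    have hyP : y * P = (h:ℝ) * N := by
      rw [hy_def]; field_simp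
    have habs : |x - y| ≤ 2 * P := by
      rw [abs_le]
      constructor
      · -- y - x ≤ 2P, i.e. -(2P) ≤ x - y
        have hqN : (q:ℝ) * N * P ≥ ((h:ℝ) + 1 - P) * N := by nlinarith
        nlinarith [mul_le_mul_of_nonneg_right hx1 hP0.le]
      · have := mul_le_mul_of_nonneg_right hx2 hP0.le
        nlinarith
    have hpow := abs_pow_sub_pow_le' (2*h) x y hx0 hxM hy0 hyM k
    have h2h : (0:ℝ) ≤ 2*h := by linarith
    calc |x^(k+1)/P - y^(k+1)/P| = |x^(k+1) - y^(k+1)| / P := by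
          rw [div_sub_div_same, abs_div, abs_of_pos hP0]
      _ ≤ (((k:ℝ)+1) * (2*h)^k * (2*P)) / P := by
          apply (div_le_div_iff_of_pos_right hP0).mpr
          calc |x^(k+1) - y^(k+1)| ≤ ((k:ℝ)+1) * (2*h)^k * |x - y| := hpow
            _ ≤ ((k:ℝ)+1) * (2*h)^k * (2*P) := by
                apply mul_le_mul_of_nonneg_left habs
                positivity
      _ = ((k:ℝ)+1) * 2^(k+1) * (h:ℝ)^k * P / P := by
          rw [mul_pow]
          ring
  -- sum up
  refine le_trans (Finset.abs_sum_le_sum_abs _ _) ?_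
  refine le_trans (Finset.sum_le_sum hterm) ?_
  rw [Finset.sum_const, hcard_pi, nsmul_eq_mul]
  have heq : (P:ℝ) * (((k:ℝ)+1) * 2^(k+1) * (h:ℝ)^k * P / P)
      = ((k:ℝ)+1) * 2^(k+1) * (h:ℝ)^k * P := by
    field_simp
  rw [heq]
  simp only [Nat.add_sub_cancel]
  apply le_mul_of_one_le_right (by positivity)
  calc (1:ℝ) = ∏ _p ∈ s, (1:ℝ) := by simp
    _ ≤ ∏ p ∈ s, (1 + 1/(p:ℝ))^(k+1) := by
        apply Finset.prod_le_prod (fun _ _ => by norm_num)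
        intro p hp
        apply one_le_pow₀
        have : (0:ℝ) ≤ 1/(p:ℝ) := by positivity
        linarith
end

section
/- For fixed r and y = (1/2) log h, ∑_{0 ≤ h₁,…,h_r ≤ h distinct} ∏_{p ≤ y} (1 - ν_p(h)/p) = h^r ∏_{p ≤ y}(1 - 1/p)^r + O(h^{r - 1/2 + o(1)}). -/
open Finset

noncomputable def distinctTuples (r h : ℕ) : Finset (Fin r → ℤ) :=
  (Fintype.piFinset (fun _ : Fin r => Finset.Icc (0:ℤ) (h:ℤ))).filter
    (fun a => ∀ i j : Fin r, i ≠ j → a i ≠ a j)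

lemma abs_pow_sub_pow_le'_s10 (a b C : ℝ) (n : ℕ) (ha : 0 ≤ a) (hb : 0 ≤ b)
    (haC : a ≤ C) (hbC : b ≤ C) : |a ^ n - b ^ n| ≤ n * C ^ (n - 1) * |a - b| := by
  have hC : 0 ≤ C := le_trans ha haC
  rw [← geom_sum₂_mul a b n, abs_mul]
  gcongr
  calc |∑ i ∈ range n, a ^ i * b ^ (n - 1 - i)| ≤ ∑ i ∈ range n, |a ^ i * b ^ (n - 1 - i)| :=
        abs_sum_le_sum_abs _ _
    _ ≤ ∑ i ∈ range n, C ^ (n - 1) := by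
        refine sum_le_sum fun i hi => ?_
        rw [abs_mul, abs_pow, abs_pow, abs_of_nonneg ha, abs_of_nonneg hb]
        calc a ^ i * b ^ (n - 1 - i) ≤ C ^ i * C ^ (n - 1 - i) := by
              gcongr
          _ = C ^ (n - 1) := by
              rw [← pow_add]
              congr 1
              have := mem_range.mp hi
              omega
    _ = n * C ^ (n - 1) := by rw [sum_const, card_range, nsmul_eq_mul]

lemma count_resclass (m b h : ℕ) (hm : 0 < m) (hbm : b < m) (hmh : m ≤ h + 1) :
    |((((Finset.Icc (0:ℤ) (h:ℤ))).filter (fun x => x % (m:ℤ) = (b:ℤ))).card : ℝ)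
      - ((h:ℝ)+1)/(m:ℝ)| ≤ 1 := by
  have hbh : b ≤ h := by omega
  have himg : ((Finset.Icc (0:ℤ) (h:ℤ)).filter (fun x => x % (m:ℤ) = (b:ℤ)))
      = (Finset.range ((h - b)/m + 1)).image (fun k : ℕ => (b:ℤ) + k * m) := by
    ext x
    simp only [mem_filter, mem_Icc, mem_image, mem_range]
    constructor
    · rintro ⟨⟨hx0, hxh⟩, hmod⟩
      have hbmod : (b:ℤ) % m = b := Int.emod_eq_of_lt (by positivity) (by exact_mod_cast hbm)
      have hdvd : (m:ℤ) ∣ x - b := by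
        have : x ≡ b [ZMOD (m:ℕ)] := by
          unfold Int.ModEq
          rw [hmod, hbmod]
        exact (Int.ModEq.dvd this.symm)
      obtain ⟨q, hq⟩ := hdvd
      have hq0 : 0 ≤ q := by nlinarith [hx0, hbm, hq]
      refine ⟨q.toNat, ?_, ?_⟩
      · have hqm : (q.toNat : ℤ) * m ≤ (h:ℤ) - b := by
          rw [Int.toNat_of_nonneg hq0]; nlinarith [hq, hxh]
        have : q.toNat * m ≤ h - b := by
          have := hqm
          rw [← Nat.cast_sub hbh] at this
          exact_mod_cast (by push_cast at this ⊢; linarith : ((q.toNat * m : ℕ) : ℤ) ≤ ((h - b : ℕ) : ℤ))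
        have := (Nat.le_div_iff_mul_le hm).mpr this
        omega
      · rw [Int.toNat_of_nonneg hq0]; linarith [hq]
    · rintro ⟨k, hk, rfl⟩
      have hkm : k * m ≤ h - b := (Nat.le_div_iff_mul_le hm).mp (by omega)
      refine ⟨⟨by positivity, ?_⟩, ?_⟩
      · have : b + k * m ≤ h := by omega
        exact_mod_cast this
      · have : ((b:ℤ) + (k:ℤ) * m) = (b:ℤ) + (m:ℤ) * k := by ring
        rw [this, Int.add_mul_emod_self_left]
        exact Int.emod_eq_of_lt (by positivity) (by exact_mod_cast hbm)
  have hinj : Function.Injective (fun k : ℕ => (b:ℤ) + k * m) := by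
    intro k k' hkk
    simp only at hkk
    have : (k:ℤ) * m = k' * m := by linarith
    have hm' : (m:ℤ) ≠ 0 := by positivity
    exact_mod_cast mul_right_cancel₀ hm' this
  rw [himg, Finset.card_image_of_injective _ hinj, Finset.card_range]
  set D := (h - b)/m with hD
  have h1 : m * D ≤ h - b := Nat.mul_div_le _ m
  have h2 : h - b < m * (D + 1) := Nat.lt_mul_div_succ _ hm
  have hR1 : (m:ℝ) * D ≤ (h:ℝ) - b := by
    have : ((m * D : ℕ) : ℝ) ≤ ((h - b : ℕ) : ℝ) := by exact_mod_cast h1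
    rw [Nat.cast_sub hbh] at this; push_cast at this; linarith
  have hR2 : (h:ℝ) - b < (m:ℝ) * D + m := by
    have : ((h - b : ℕ) : ℝ) < ((m * (D+1) : ℕ) : ℝ) := by exact_mod_cast h2
    rw [Nat.cast_sub hbh] at this; push_cast at this; linarith
  have hmR : (0:ℝ) < m := by exact_mod_cast hm
  have hbR : (b:ℝ) ≤ (m:ℝ) - 1 := by
    have : (b:ℝ) + 1 ≤ m := by exact_mod_cast hbm
    linarith
  have hbR0 : (0:ℝ) ≤ b := by positivity
  rw [abs_le]
  constructor
  · rw [neg_le, neg_sub, sub_le_iff_le_add, div_le_iff₀ hmR]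
    push_cast
    nlinarith
  · rw [sub_le_iff_le_add, ← sub_le_iff_le_add', le_div_iff₀ hmR]
    push_cast
    nlinarith

lemma crt_iff (t : Finset ℕ) (ht : ∀ p ∈ t, p.Prime) (c : (p : ℕ) → ZMod p) :
    ∃ b : ℕ, b < ∏ p ∈ t, p ∧
      ∀ n : ℤ, ((∀ p ∈ t, (n : ZMod p) = c p) ↔ n % (∏ p ∈ t, p : ℕ) = b) := by
  set ι := {x : ℕ // x ∈ t}
  set a : ι → ℕ := fun i => i.1 with ha
  have hcop : Pairwise (Function.onFun Nat.Coprime a) := by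
    intro i j hij
    have hne : i.1 ≠ j.1 := fun h => hij (Subtype.ext h)
    exact (Nat.coprime_primes (ht _ i.2) (ht _ j.2)).mpr hne
  have hprod : (∏ i : ι, a i) = ∏ p ∈ t, p := Finset.prod_coe_sort t (fun p => p)
  have hm0 : 0 < ∏ p ∈ t, p :=
    Finset.prod_pos fun p hp => (ht p hp).pos
  haveI : NeZero (∏ i : ι, a i) := ⟨by rw [hprod]; omega⟩
  set e := ZMod.prodEquivPi a hcop with he
  set b := (e.symm (fun i : ι => c i.1)).val with hb
  have hbm : b < ∏ i : ι, a i := ZMod.val_lt _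
  refine ⟨b, by rwa [hprod] at hbm, fun n => ?_⟩
  have hcomp : ∀ (z : ℤ) (i : ι), e (z : ZMod (∏ i : ι, a i)) i = (z : ZMod (a i)) := by
    intro z i
    have := map_intCast ((Pi.evalRingHom (fun i : ι => ZMod (a i)) i).comp
      (e : ZMod (∏ i : ι, a i) →+* Π i : ι, ZMod (a i))) z
    simpa using this
  have step1 : (∀ p ∈ t, (n : ZMod p) = c p) ↔
      e (n : ZMod (∏ i : ι, a i)) = (fun i : ι => c i.1) := by
    rw [funext_iff]
    constructor
    · intro H i; rw [hcomp]; exact H i.1 i.2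
    · intro H p hp; have := H ⟨p, hp⟩; rwa [hcomp] at this
  rw [step1, show (e (n : ZMod (∏ i : ι, a i)) = fun i : ι => c i.1) ↔
      ((n : ZMod (∏ i : ι, a i)) = e.symm fun i : ι => c i.1) from
    ⟨fun h' => by rw [← h', RingEquiv.symm_apply_apply],
     fun h' => by rw [h', RingEquiv.apply_symm_apply]⟩]
  have hval : e.symm (fun i : ι => c i.1) = ((b : ℕ) : ZMod (∏ i : ι, a i)) := by
    rw [hb, ZMod.natCast_val, ZMod.cast_id]
  rw [hval, show ((b : ℕ) : ZMod (∏ i : ι, a i)) = (((b:ℕ):ℤ) : ZMod (∏ i : ι, a i)) by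
      push_cast; rfl,
    ZMod.intCast_eq_intCast_iff, ← hprod]
  have hbmod' : (b:ℤ) % ((∏ i : ι, a i : ℕ) : ℤ) = b := by
    apply Int.emod_eq_of_lt (by positivity)
    exact_mod_cast hbm
  constructor
  · intro H; rw [Int.ModEq] at H; rw [H]; exact hbmod'
  · intro H; rw [Int.ModEq, H, hbmod']

lemma count_crt (t : Finset ℕ) (ht : ∀ p ∈ t, p.Prime) (c : (p : ℕ) → ZMod p) (h : ℕ)
    (hP : (∏ p ∈ t, p) ≤ h + 1) :
    |(((Finset.Icc (0:ℤ) (h:ℤ)).filter (fun x => ∀ p ∈ t, (x : ZMod p) = c p)).card : ℝ)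
      - ((h:ℝ)+1)/((∏ p ∈ t, p : ℕ) : ℝ)| ≤ 1 := by
  obtain ⟨b, hbm, hiff⟩ := crt_iff t ht c
  have heq : (Finset.Icc (0:ℤ) (h:ℤ)).filter (fun x => ∀ p ∈ t, (x : ZMod p) = c p)
      = (Finset.Icc (0:ℤ) (h:ℤ)).filter (fun x => x % ((∏ p ∈ t, p : ℕ):ℤ) = (b:ℤ)) := by
    apply Finset.filter_congr
    intro x _
    exact hiff x
  rw [heq]
  exact count_resclass _ b h (Finset.prod_pos fun p hp => (ht p hp).pos) hbm hP

lemma sieve_bound (Q : Finset ℕ) (hQ : ∀ p ∈ Q, p.Prime) (c : (p : ℕ) → ZMod p) (h : ℕ)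
    (hP : (∏ p ∈ Q, p) ≤ h + 1) :
    |(∑ x ∈ Finset.Icc (0:ℤ) (h:ℤ), ∏ p ∈ Q, (if (x : ZMod p) = c p then (0:ℝ) else 1))
      - ((h:ℝ)+1) * ∏ p ∈ Q, (1 - 1/(p:ℝ))| ≤ 2 ^ Q.card := by
  classical
  have expand1 : ∀ x : ℤ, ∏ p ∈ Q, (if (x:ZMod p) = c p then (0:ℝ) else 1)
      = ∑ t ∈ Q.powerset,
          (-1:ℝ)^t.card * (if (∀ p ∈ t, (x:ZMod p) = c p) then (1:ℝ) else 0) := by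
    intro x
    have key : ∀ p ∈ Q, (if (x:ZMod p) = c p then (0:ℝ) else 1)
        = (-(if (x:ZMod p) = c p then (1:ℝ) else 0)) + 1 := by
      intro p _; split <;> ring
    rw [Finset.prod_congr rfl key, Finset.prod_add]
    refine Finset.sum_congr rfl fun t _ => ?_
    rw [Finset.prod_const_one, mul_one]
    have : ∀ p ∈ t, (-(if (x:ZMod p) = c p then (1:ℝ) else 0))
        = (-1) * (if (x:ZMod p) = c p then (1:ℝ) else 0) := by intro p _; ring
    rw [Finset.prod_congr rfl this, Finset.prod_mul_distrib, Finset.prod_const,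
      Finset.prod_boole]
  have expand2 : ∏ p ∈ Q, (1 - 1/(p:ℝ))
      = ∑ t ∈ Q.powerset, (-1:ℝ)^t.card * (1 / ∏ p ∈ t, (p:ℝ)) := by
    have key : ∀ p ∈ Q, (1 - 1/(p:ℝ)) = (-(1/(p:ℝ))) + 1 := by intro p _; ring
    rw [Finset.prod_congr rfl key, Finset.prod_add]
    refine Finset.sum_congr rfl fun t _ => ?_
    rw [Finset.prod_const_one, mul_one]
    have : ∀ p ∈ t, (-(1/(p:ℝ))) = (-1) * (1/(p:ℝ)) := by intro p _; ring
    rw [Finset.prod_congr rfl this, Finset.prod_mul_distrib, Finset.prod_const]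
    congr 1
    rw [one_div, ← Finset.prod_inv_distrib]
    simp [one_div]
  calc |(∑ x ∈ Finset.Icc (0:ℤ) (h:ℤ), ∏ p ∈ Q, (if (x : ZMod p) = c p then (0:ℝ) else 1))
      - ((h:ℝ)+1) * ∏ p ∈ Q, (1 - 1/(p:ℝ))|
      = |∑ t ∈ Q.powerset, (-1:ℝ)^t.card *
          ((((Finset.Icc (0:ℤ) (h:ℤ)).filter (fun x => ∀ p ∈ t, (x : ZMod p) = c p)).card : ℝ)
            - ((h:ℝ)+1) / ∏ p ∈ t, (p:ℝ))| := by
        congr 1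
        rw [Finset.sum_congr rfl (fun x _ => expand1 x), Finset.sum_comm, expand2,
          Finset.mul_sum, ← Finset.sum_sub_distrib]
        refine Finset.sum_congr rfl fun t _ => ?_
        rw [← Finset.mul_sum, Finset.sum_boole]
        ring
    _ ≤ ∑ t ∈ Q.powerset, |(-1:ℝ)^t.card *
          ((((Finset.Icc (0:ℤ) (h:ℤ)).filter (fun x => ∀ p ∈ t, (x : ZMod p) = c p)).card : ℝ)
            - ((h:ℝ)+1) / ∏ p ∈ t, (p:ℝ))| := Finset.abs_sum_le_sum_abs _ _
    _ ≤ ∑ t ∈ Q.powerset, 1 := by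
        refine Finset.sum_le_sum fun t htm => ?_
        rw [abs_mul, abs_pow, abs_neg, abs_one, one_pow, one_mul]
        have hsub := Finset.mem_powerset.mp htm
        have ht : ∀ p ∈ t, p.Prime := fun p hp => hQ p (hsub hp)
        have hPt : (∏ p ∈ t, p) ≤ h + 1 := by
          refine le_trans ?_ hP
          apply Finset.prod_le_prod_of_subset_of_one_le' hsub
          intro p hp _
          exact (hQ p hp).one_lt.le
        have := count_crt t ht c h hPt
        rwa [Nat.cast_prod] at this
    _ = 2 ^ Q.card := by rw [Finset.sum_const, Finset.card_powerset, nsmul_eq_mul, mul_one]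
        <;> norm_num

lemma nu_card (p : ℕ) (hp : p.Prime) {r : ℕ} (a : Fin r → ℤ) :
    (1 - (nu p a : ℝ)/(p:ℝ)) =
      (((Finset.range p).filter
        (fun c => ∀ i, (a i : ZMod p) ≠ ((c:ℕ) : ZMod p))).card : ℝ) / (p:ℝ) := by
  haveI : NeZero p := ⟨hp.ne_zero⟩
  have hcard : ((Finset.range p).filter
      (fun c => ∀ i, (a i : ZMod p) ≠ ((c:ℕ) : ZMod p))).card
      = p - nu p a := by
    have hbij : ((Finset.range p).filter
        (fun c => ∀ i, (a i : ZMod p) ≠ ((c:ℕ) : ZMod p))).card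
        = ((Finset.univ : Finset (ZMod p)) \
            (Finset.univ.image (fun i => ((a i : ZMod p))))).card := by
      apply Finset.card_nbij (fun c => ((c:ℕ) : ZMod p))
      · intro c hc
        simp only [Finset.mem_coe, Finset.mem_filter, Finset.mem_range] at hc
        simp only [Finset.mem_coe, Finset.mem_sdiff, Finset.mem_univ, true_and, Finset.mem_image, not_exists]
        intro i
        exact fun hcon => hc.2 i hcon
      · intro c hc c' hc' hcc
        simp only [Finset.coe_filter, Set.mem_setOf_eq, Finset.mem_range] at hc hc'
        have := congrArg ZMod.val hcc
        rwa [ZMod.val_cast_of_lt hc.1, ZMod.val_cast_of_lt hc'.1] at this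
      · intro z hz
        simp only [Finset.coe_sdiff, Set.mem_diff, Finset.coe_univ, Set.mem_univ,
          true_and, Finset.coe_image, Set.mem_image, Finset.mem_coe, Finset.mem_univ] at hz
        refine ⟨z.val, ?_, ?_⟩
        · simp only [Finset.coe_filter, Set.mem_setOf_eq, Finset.mem_range]
          refine ⟨ZMod.val_lt z, fun i hcon => ?_⟩
          apply hz
          exact ⟨i, by rw [hcon, ZMod.natCast_val, ZMod.cast_id]⟩
        · show ((z.val : ℕ) : ZMod p) = z
          rw [ZMod.natCast_val, ZMod.cast_id]
    rw [hbij, Finset.card_sdiff_of_subset (Finset.subset_univ _), Finset.card_univ, ZMod.card]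
    rfl
  rw [hcard]
  have hnu_le : nu p a ≤ p := by
    have h2 : nu p a ≤ Fintype.card (ZMod p) :=
      Finset.card_le_univ (Finset.univ.image (fun i => ((a i : ZMod p))))
    rwa [ZMod.card] at h2
  have hp0 : (p:ℝ) ≠ 0 := Nat.cast_ne_zero.mpr hp.ne_zero
  rw [Nat.cast_sub hnu_le]
  field_simp

lemma box_eq (r h : ℕ) (Q : Finset ℕ) (hQ : ∀ p ∈ Q, p.Prime) :
    ∑ a ∈ Fintype.piFinset (fun _ : Fin r => Finset.Icc (0:ℤ) (h:ℤ)),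
        ∏ p ∈ Q, (1 - (nu p a : ℝ)/(p:ℝ))
    = (1/∏ p ∈ Q, (p:ℝ)) * ∑ γ ∈ Q.pi (fun p => Finset.range p),
        (∑ x ∈ Finset.Icc (0:ℤ) (h:ℤ), ∏ q ∈ Q.attach,
          (if (x : ZMod q.1) = ((γ q.1 q.2 : ℕ) : ZMod q.1) then (0:ℝ) else 1)) ^ r := by
  classical
  have step1 : ∀ a : Fin r → ℤ, ∏ p ∈ Q, (1 - (nu p a : ℝ)/(p:ℝ))
      = (1/∏ p ∈ Q, (p:ℝ)) * ∑ γ ∈ Q.pi (fun p => Finset.range p),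
          ∏ q ∈ Q.attach,
            (if ∀ i, (a i : ZMod q.1) ≠ ((γ q.1 q.2 : ℕ) : ZMod q.1) then (1:ℝ) else 0) := by
    intro a
    rw [Finset.prod_congr rfl (fun p hp => nu_card p (hQ p hp) a),
      Finset.prod_div_distrib]
    rw [div_eq_mul_inv, ← one_div, mul_comm]
    congr 1
    have : ∀ p ∈ Q, ((((Finset.range p).filter
        (fun c => ∀ i, (a i : ZMod p) ≠ ((c:ℕ) : ZMod p))).card : ℝ))
        = ∑ c ∈ Finset.range p,
            (if ∀ i, (a i : ZMod p) ≠ ((c:ℕ) : ZMod p) then (1:ℝ) else 0) := by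
      intro p _
      rw [Finset.sum_boole]
    rw [Finset.prod_congr rfl this, Finset.prod_sum]
  rw [Finset.sum_congr rfl (fun a _ => step1 a), ← Finset.mul_sum]
  congr 1
  rw [Finset.sum_comm]
  refine Finset.sum_congr rfl fun γ _ => ?_
  set G : ℤ → ℝ := fun x => ∏ q ∈ Q.attach,
    (if (x : ZMod q.1) = ((γ q.1 q.2 : ℕ) : ZMod q.1) then (0:ℝ) else 1) with hG
  have inner : ∀ a : Fin r → ℤ, ∏ q ∈ Q.attach,
      (if ∀ i, (a i : ZMod q.1) ≠ ((γ q.1 q.2 : ℕ) : ZMod q.1) then (1:ℝ) else 0)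
      = ∏ i : Fin r, G (a i) := by
    intro a
    rw [hG]
    simp only
    rw [← Finset.prod_comm]
    refine Finset.prod_congr rfl fun q _ => ?_
    have hpt : ∀ i : Fin r,
        (if (a i : ZMod q.1) = ((γ q.1 q.2 : ℕ) : ZMod q.1) then (0:ℝ) else 1)
        = (if (a i : ZMod q.1) ≠ ((γ q.1 q.2 : ℕ) : ZMod q.1) then (1:ℝ) else 0) := by
      intro i
      by_cases hc : (a i : ZMod q.1) = ((γ q.1 q.2 : ℕ) : ZMod q.1) <;> simp [hc]
    rw [Finset.prod_congr rfl (fun i _ => hpt i), Fintype.prod_boole]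
    split_ifs <;> rfl
  rw [Finset.sum_congr rfl (fun a _ => inner a)]
  have := Finset.prod_univ_sum (fun _ : Fin r => Finset.Icc (0:ℤ) (h:ℤ))
    (fun _ (z : ℤ) => G z)
  rw [← this, Finset.prod_const, Finset.card_univ, Fintype.card_fin]

lemma main_box (r h : ℕ) (Q : Finset ℕ) (hQ : ∀ p ∈ Q, p.Prime)
    (hP : (∏ p ∈ Q, p) ≤ h + 1) :
    |(∑ a ∈ Fintype.piFinset (fun _ : Fin r => Finset.Icc (0:ℤ) (h:ℤ)),
        ∏ p ∈ Q, (1 - (nu p a : ℝ)/(p:ℝ)))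
      - ((h:ℝ)+1)^r * ∏ p ∈ Q, (1 - 1/(p:ℝ))^r|
    ≤ r * ((h:ℝ)+1)^(r-1) * 2 ^ Q.card := by
  classical
  rw [box_eq r h Q hQ]
  set M : ℝ := ((h:ℝ)+1) * ∏ p ∈ Q, (1 - 1/(p:ℝ)) with hM
  have hMain : ((h:ℝ)+1)^r * ∏ p ∈ Q, (1 - 1/(p:ℝ))^r = M ^ r := by
    rw [hM, mul_pow, Finset.prod_pow]
  rw [hMain]
  have hPpos : (0:ℝ) < ∏ p ∈ Q, (p:ℝ) :=
    Finset.prod_pos fun p hp => by exact_mod_cast (hQ p hp).pos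
  have hcard : (((Q.pi fun p => Finset.range p)).card : ℝ) = ∏ p ∈ Q, (p:ℝ) := by
    rw [Finset.card_pi]
    push_cast
    exact Finset.prod_congr rfl fun p _ => by rw [Finset.card_range]
  -- rewrite M^r as average
  have hMr : M ^ r = (1/∏ p ∈ Q, (p:ℝ)) * ∑ _γ ∈ Q.pi (fun p => Finset.range p), M ^ r := by
    rw [Finset.sum_const, nsmul_eq_mul, hcard]
    field_simp
  rw [hMr, ← mul_sub, ← Finset.sum_sub_distrib, abs_mul, abs_of_pos (by positivity)]
  -- bound each term
  have hprod01 : 0 ≤ (∏ p ∈ Q, (1 - 1/(p:ℝ))) ∧ (∏ p ∈ Q, (1 - 1/(p:ℝ))) ≤ 1 := by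
    constructor
    · refine Finset.prod_nonneg fun p hp => ?_
      have : (1:ℝ) ≤ (p:ℝ) := by exact_mod_cast (hQ p hp).pos
      have hppos : (0:ℝ) < (p:ℝ) := by linarith
      rw [sub_nonneg, div_le_one hppos]
      exact this
    · refine Finset.prod_le_one (fun p hp => ?_) (fun p hp => ?_)
      · have : (1:ℝ) ≤ (p:ℝ) := by exact_mod_cast (hQ p hp).pos
        have hppos : (0:ℝ) < (p:ℝ) := by linarith
        rw [sub_nonneg, div_le_one hppos]
        exact this
      · have hppos : (0:ℝ) < (p:ℝ) := by exact_mod_cast (hQ p hp).pos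
        have : 0 ≤ 1/(p:ℝ) := by positivity
        linarith
  have hM0 : 0 ≤ M := by
    rw [hM]; have := hprod01.1; positivity
  have hMh : M ≤ (h:ℝ)+1 := by
    rw [hM]
    nlinarith [hprod01.1, hprod01.2]
  have hbound : ∀ γ ∈ Q.pi (fun p => Finset.range p),
      |(∑ x ∈ Finset.Icc (0:ℤ) (h:ℤ), ∏ q ∈ Q.attach,
          (if (x : ZMod q.1) = ((γ q.1 q.2 : ℕ) : ZMod q.1) then (0:ℝ) else 1)) ^ r - M ^ r|
      ≤ r * ((h:ℝ)+1)^(r-1) * 2 ^ Q.card := by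
    intro γ hγ
    set c : (p : ℕ) → ZMod p := fun p =>
      if hp : p ∈ Q then ((γ p hp : ℕ) : ZMod p) else 0 with hc
    set T : ℝ := ∑ x ∈ Finset.Icc (0:ℤ) (h:ℤ), ∏ p ∈ Q,
      (if (x : ZMod p) = c p then (0:ℝ) else 1) with hT
    have hTeq : (∑ x ∈ Finset.Icc (0:ℤ) (h:ℤ), ∏ q ∈ Q.attach,
        (if (x : ZMod q.1) = ((γ q.1 q.2 : ℕ) : ZMod q.1) then (0:ℝ) else 1)) = T := by
      rw [hT]
      refine Finset.sum_congr rfl fun x _ => ?_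
      rw [← Finset.prod_attach Q (fun p => (if (x : ZMod p) = c p then (0:ℝ) else 1))]
      refine Finset.prod_congr rfl fun q _ => ?_
      congr 1
      rw [hc]
      simp only [q.2, dif_pos]
    rw [hTeq]
    have hT0 : 0 ≤ T := by
      rw [hT]
      refine Finset.sum_nonneg fun x _ => Finset.prod_nonneg fun p _ => ?_
      split <;> norm_num
    have hTh : T ≤ (h:ℝ)+1 := by
      rw [hT]
      calc ∑ x ∈ Finset.Icc (0:ℤ) (h:ℤ), ∏ p ∈ Q, (if (x : ZMod p) = c p then (0:ℝ) else 1)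
          ≤ ∑ x ∈ Finset.Icc (0:ℤ) (h:ℤ), 1 := by
            refine Finset.sum_le_sum fun x _ => ?_
            refine Finset.prod_le_one (fun p _ => by split <;> norm_num)
              (fun p _ => by split <;> norm_num)
        _ = ((h:ℝ)+1) := by
            rw [Finset.sum_const, nsmul_eq_mul, mul_one, Int.card_Icc]
            simp
    calc |T ^ r - M ^ r| ≤ r * ((h:ℝ)+1)^(r-1) * |T - M| :=
          abs_pow_sub_pow_le'_s10 T M ((h:ℝ)+1) r hT0 hM0 hTh hMh
      _ ≤ r * ((h:ℝ)+1)^(r-1) * 2 ^ Q.card := by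
          have hs := sieve_bound Q hQ c h hP
          rw [← hT, ← hM] at hs
          exact mul_le_mul_of_nonneg_left hs (by positivity)
  calc (1/∏ p ∈ Q, (p:ℝ)) * |∑ γ ∈ Q.pi (fun p => Finset.range p),
        ((∑ x ∈ Finset.Icc (0:ℤ) (h:ℤ), ∏ q ∈ Q.attach,
          (if (x : ZMod q.1) = ((γ q.1 q.2 : ℕ) : ZMod q.1) then (0:ℝ) else 1)) ^ r - M ^ r)|
      ≤ (1/∏ p ∈ Q, (p:ℝ)) * ∑ γ ∈ Q.pi (fun p => Finset.range p),
          (r * ((h:ℝ)+1)^(r-1) * 2 ^ Q.card) := by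
        exact mul_le_mul_of_nonneg_left
          (le_trans (Finset.abs_sum_le_sum_abs _ _) (Finset.sum_le_sum hbound))
          (by positivity)
    _ = r * ((h:ℝ)+1)^(r-1) * 2 ^ Q.card := by
        rw [Finset.sum_const, nsmul_eq_mul, hcard]
        field_simp

lemma nu_le (p : ℕ) (hp : p.Prime) {r : ℕ} (a : Fin r → ℤ) : nu p a ≤ p := by
  haveI : NeZero p := ⟨hp.ne_zero⟩
  have h2 : nu p a ≤ Fintype.card (ZMod p) :=
    Finset.card_le_univ (Finset.univ.image (fun i => ((a i : ZMod p))))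
  rwa [ZMod.card] at h2

lemma factor_mem (p : ℕ) (hp : p.Prime) {r : ℕ} (a : Fin r → ℤ) :
    0 ≤ 1 - (nu p a : ℝ)/(p:ℝ) ∧ 1 - (nu p a : ℝ)/(p:ℝ) ≤ 1 := by
  have hppos : (0:ℝ) < p := by exact_mod_cast hp.pos
  constructor
  · rw [sub_nonneg, div_le_one hppos]
    exact_mod_cast nu_le p hp a
  · have : 0 ≤ (nu p a : ℝ)/(p:ℝ) := by positivity
    linarith

lemma prod_factor_mem (Q : Finset ℕ) (hQ : ∀ p ∈ Q, p.Prime) {r : ℕ} (a : Fin r → ℤ) :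
    0 ≤ (∏ p ∈ Q, (1 - (nu p a : ℝ)/(p:ℝ))) ∧
      (∏ p ∈ Q, (1 - (nu p a : ℝ)/(p:ℝ))) ≤ 1 := by
  constructor
  · exact Finset.prod_nonneg fun p hp => (factor_mem p (hQ p hp) a).1
  · exact Finset.prod_le_one (fun p hp => (factor_mem p (hQ p hp) a).1)
      (fun p hp => (factor_mem p (hQ p hp) a).2)

lemma nondistinct_card (r h : ℕ) (hr : 1 ≤ r) :
    ((Fintype.piFinset (fun _ : Fin r => Finset.Icc (0:ℤ) (h:ℤ))).filter
      (fun a => ¬ ∀ i j : Fin r, i ≠ j → a i ≠ a j)).card ≤ r * r * (h+1)^(r-1) := by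
  classical
  set Box := Fintype.piFinset (fun _ : Fin r => Finset.Icc (0:ℤ) (h:ℤ)) with hBox
  have hsub : Box.filter (fun a => ¬ ∀ i j : Fin r, i ≠ j → a i ≠ a j) ⊆
      ((Finset.univ : Finset (Fin r × Fin r)).filter (fun ij => ij.1 ≠ ij.2)).biUnion
        (fun ij => Box.filter (fun a => a ij.1 = a ij.2)) := by
    intro a ha
    simp only [Finset.mem_filter] at ha
    push_neg at ha
    obtain ⟨hBoxmem, i, j, hij, heq⟩ := ha
    simp only [Finset.mem_biUnion, Finset.mem_filter, Finset.mem_univ, true_and]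
    exact ⟨(i, j), hij, hBoxmem, heq⟩
  have hone : ∀ i j : Fin r, i ≠ j →
      (Box.filter (fun a => a i = a j)).card ≤ (h+1)^(r-1) := by
    intro i j hij
    have hinj : Set.InjOn (fun a => Function.update a j 0)
        ((Box.filter (fun a => a i = a j)) : Set (Fin r → ℤ)) := by
      intro a ha b hb hab
      simp only [Finset.coe_filter, Set.mem_setOf_eq] at ha hb
      funext k
      by_cases hk : k = j
      · subst hk
        have h1 : a i = a k := ha.2
        have h2 : b i = b k := hb.2
        have h3 : Function.update a k 0 i = Function.update b k 0 i := congrFun hab i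
        rw [Function.update_of_ne hij, Function.update_of_ne hij] at h3
        rw [← h1, ← h2, h3]
      · have h3 : Function.update a j 0 k = Function.update b j 0 k := congrFun hab k
        rwa [Function.update_of_ne hk, Function.update_of_ne hk] at h3
    have hmaps : ∀ a ∈ Box.filter (fun a => a i = a j),
        Function.update a j 0 ∈ Fintype.piFinset
          (fun k : Fin r => if k = j then ({0} : Finset ℤ) else Finset.Icc (0:ℤ) (h:ℤ)) := by
      intro a ha
      simp only [Finset.mem_filter, hBox, Fintype.mem_piFinset] at ha ⊢
      intro k
      by_cases hk : k = j
      · subst hk; simp [Function.update_self]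
      · rw [Function.update_of_ne hk, if_neg hk]
        exact ha.1 k
    have hcard := Finset.card_le_card_of_injOn _ hmaps hinj
    refine le_trans hcard ?_
    rw [Fintype.card_piFinset]
    rw [← Finset.mul_prod_erase Finset.univ _ (Finset.mem_univ j)]
    rw [if_pos rfl, Finset.card_singleton, one_mul]
    have : ∀ k ∈ Finset.univ.erase j,
        (if k = j then ({0} : Finset ℤ) else Finset.Icc (0:ℤ) (h:ℤ)).card = h + 1 := by
      intro k hk
      rw [if_neg (Finset.mem_erase.mp hk).1, Int.card_Icc]
      simp
    rw [Finset.prod_congr rfl this, Finset.prod_const, Finset.card_erase_of_mem (Finset.mem_univ j),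
      Finset.card_univ, Fintype.card_fin]
  calc (Box.filter (fun a => ¬ ∀ i j : Fin r, i ≠ j → a i ≠ a j)).card
      ≤ (((Finset.univ : Finset (Fin r × Fin r)).filter (fun ij => ij.1 ≠ ij.2)).biUnion
          (fun ij => Box.filter (fun a => a ij.1 = a ij.2))).card := Finset.card_le_card hsub
    _ ≤ ∑ ij ∈ (Finset.univ : Finset (Fin r × Fin r)).filter (fun ij => ij.1 ≠ ij.2),
          (Box.filter (fun a => a ij.1 = a ij.2)).card := Finset.card_biUnion_le
    _ ≤ ∑ _ij ∈ (Finset.univ : Finset (Fin r × Fin r)).filter (fun ij => ij.1 ≠ ij.2),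
          (h+1)^(r-1) := by
        refine Finset.sum_le_sum fun ij hij => ?_
        exact hone ij.1 ij.2 (Finset.mem_filter.mp hij).2
    _ ≤ r * r * (h+1)^(r-1) := by
        rw [Finset.sum_const, smul_eq_mul]
        have : ((Finset.univ : Finset (Fin r × Fin r)).filter (fun ij => ij.1 ≠ ij.2)).card
            ≤ r * r := by
          calc _ ≤ (Finset.univ : Finset (Fin r × Fin r)).card := Finset.card_filter_le _ _
            _ = r * r := by rw [Finset.card_univ]; simp [Fintype.card_prod]
        exact Nat.mul_le_mul_right _ this

lemma distinct_diff (r h : ℕ) (hr : 1 ≤ r) (Q : Finset ℕ) (hQ : ∀ p ∈ Q, p.Prime) :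
    |(∑ a ∈ distinctTuples r h, ∏ p ∈ Q, (1 - (nu p a : ℝ)/(p:ℝ)))
      - ∑ a ∈ Fintype.piFinset (fun _ : Fin r => Finset.Icc (0:ℤ) (h:ℤ)),
          ∏ p ∈ Q, (1 - (nu p a : ℝ)/(p:ℝ))|
    ≤ (r:ℝ) * r * ((h:ℝ)+1)^(r-1) := by
  classical
  set Box := Fintype.piFinset (fun _ : Fin r => Finset.Icc (0:ℤ) (h:ℤ)) with hBox
  have hsplit : ∑ a ∈ Box, ∏ p ∈ Q, (1 - (nu p a : ℝ)/(p:ℝ))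
      = (∑ a ∈ distinctTuples r h, ∏ p ∈ Q, (1 - (nu p a : ℝ)/(p:ℝ)))
        + ∑ a ∈ Box.filter (fun a => ¬ ∀ i j : Fin r, i ≠ j → a i ≠ a j),
            ∏ p ∈ Q, (1 - (nu p a : ℝ)/(p:ℝ)) := by
    rw [distinctTuples]
    exact (Finset.sum_filter_add_sum_filter_not Box _ _).symm
  rw [hsplit]
  rw [abs_sub_comm, add_sub_cancel_left]
  have h2 := nondistinct_card r h hr
  calc |∑ a ∈ Box.filter (fun a => ¬ ∀ i j : Fin r, i ≠ j → a i ≠ a j),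
          ∏ p ∈ Q, (1 - (nu p a : ℝ)/(p:ℝ))|
      ≤ ∑ a ∈ Box.filter (fun a => ¬ ∀ i j : Fin r, i ≠ j → a i ≠ a j),
          |∏ p ∈ Q, (1 - (nu p a : ℝ)/(p:ℝ))| := Finset.abs_sum_le_sum_abs _ _
    _ ≤ ∑ _a ∈ Box.filter (fun a => ¬ ∀ i j : Fin r, i ≠ j → a i ≠ a j), (1:ℝ) := by
        refine Finset.sum_le_sum fun a _ => ?_
        rw [abs_of_nonneg (prod_factor_mem Q hQ a).1]
        exact (prod_factor_mem Q hQ a).2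
    _ = ((Box.filter (fun a => ¬ ∀ i j : Fin r, i ≠ j → a i ≠ a j)).card : ℝ) := by
        rw [Finset.sum_const, nsmul_eq_mul, mul_one]
    _ ≤ (r:ℝ) * r * ((h:ℝ)+1)^(r-1) := by
        have : (((Box.filter (fun a => ¬ ∀ i j : Fin r, i ≠ j → a i ≠ a j)).card : ℝ))
            ≤ ((r * r * (h+1)^(r-1) : ℕ) : ℝ) := by exact_mod_cast h2
        refine le_trans this ?_
        push_cast
        exact le_of_eq (by ring)
        

/-- With `y = (1/2) log h`,
`∑_{0 ≤ h₁,…,h_r ≤ h distinct} ∏_{p ≤ y}(1 - ν_p(h)/p)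
  = h^r ∏_{p ≤ y}(1 - 1/p)^r + O(h^{r - 1/2 + o(1)})`. -/
theorem truncated_sum_asymp (r : ℕ) (hr : 1 ≤ r) :
    ∀ ε : ℝ, 0 < ε → ∀ᶠ h : ℕ in Filter.atTop,
      |(∑ a ∈ distinctTuples r h,
          ∏ p ∈ (Finset.range (⌊Real.log h / 2⌋₊ + 1)).filter Nat.Prime,
            (1 - (nu p a : ℝ) / (p : ℝ)))
        - (h : ℝ) ^ r *
            ∏ p ∈ (Finset.range (⌊Real.log h / 2⌋₊ + 1)).filter Nat.Prime,
              (1 - 1 / (p : ℝ)) ^ r|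
      ≤ (h : ℝ) ^ ((r : ℝ) - 1 / 2 + ε) := by
  intro ε hε
  have hlog2 : Real.log 2 < 1 := by
    have := Real.log_two_lt_d9
    linarith
  have hlog2' : 0 < Real.log 2 := Real.log_pos (by norm_num)
  have hδ : (0:ℝ) < 1/2 - Real.log 2 / 2 := by linarith
  set C : ℝ := 2^(r+1) * r^2 with hCdef
  have htend : Filter.Tendsto (fun h : ℕ => (h:ℝ)^(1/2 - Real.log 2/2))
      Filter.atTop Filter.atTop :=
    (tendsto_rpow_atTop hδ).comp tendsto_natCast_atTop_atTop
  filter_upwards [htend.eventually_ge_atTop C, Filter.eventually_ge_atTop 1] with h hCh h1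
  -- setup
  set Y := ⌊Real.log h / 2⌋₊ with hY
  set Q := (Finset.range (Y + 1)).filter Nat.Prime with hQdef
  have hQ : ∀ p ∈ Q, p.Prime := fun p hp => (Finset.mem_filter.mp hp).2
  have hhR : (1:ℝ) ≤ (h:ℝ) := by exact_mod_cast h1
  have hhR0 : (0:ℝ) < (h:ℝ) := by linarith
  have hYle : (Y:ℝ) ≤ Real.log h / 2 := Nat.floor_le (by positivity)
  -- prime product bound
  have hPh : (∏ p ∈ Q, p) ≤ h + 1 := by
    have h4Y : ((∏ p ∈ Q, p : ℕ) : ℝ) ≤ (4:ℝ)^(Y:ℕ) := by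
      have := primorial_le_4_pow Y
      have heq : primorial Y = ∏ p ∈ Q, p := rfl
      rw [heq] at this
      exact_mod_cast this
    have h4Y2 : (4:ℝ)^(Y:ℕ) ≤ (h:ℝ) := by
      rw [← Real.rpow_natCast 4 Y]
      calc (4:ℝ)^(Y:ℝ) ≤ (4:ℝ)^(Real.log h / 2) :=
            Real.rpow_le_rpow_of_exponent_le (by norm_num) hYle
        _ = Real.exp (Real.log h / 2 * Real.log 4) := by
            rw [Real.rpow_def_of_pos (by norm_num)]
            ring_nf
        _ = Real.exp (Real.log h * Real.log 2) := by
            congr 1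
            rw [show (4:ℝ) = 2^2 by norm_num, Real.log_pow]
            push_cast
            ring
        _ = (h:ℝ) ^ (Real.log 2) := by
            rw [Real.rpow_def_of_pos hhR0]
        _ ≤ (h:ℝ) ^ (1:ℝ) := Real.rpow_le_rpow_of_exponent_le hhR hlog2.le
        _ = (h:ℝ) := Real.rpow_one _
    have hfin2 : ((∏ p ∈ Q, p : ℕ) : ℝ) ≤ (h:ℝ) := le_trans h4Y h4Y2
    have := Nat.cast_le (α := ℝ).mp hfin2
    omega
  -- 2 ^ card bound
  have h2c : (2:ℝ)^Q.card ≤ 2 * (h:ℝ)^(Real.log 2/2) := by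
    have hQcard : Q.card ≤ Y + 1 := by
      calc Q.card ≤ (Finset.range (Y+1)).card := Finset.card_filter_le _ _
        _ = Y + 1 := Finset.card_range _
    calc (2:ℝ)^Q.card ≤ (2:ℝ)^(Y+1) := pow_le_pow_right₀ one_le_two hQcard
      _ = 2 * (2:ℝ)^(Y:ℕ) := by rw [pow_succ]; ring
      _ ≤ 2 * (h:ℝ)^(Real.log 2/2) := by
          have : (2:ℝ)^(Y:ℕ) ≤ (h:ℝ)^(Real.log 2/2) := by
            rw [← Real.rpow_natCast 2 Y]
            calc (2:ℝ)^(Y:ℝ) ≤ (2:ℝ)^(Real.log h / 2) :=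
                  Real.rpow_le_rpow_of_exponent_le one_le_two hYle
              _ = Real.exp (Real.log h / 2 * Real.log 2) := by
                  rw [Real.rpow_def_of_pos (by norm_num)]
                  ring_nf
              _ = (h:ℝ) ^ (Real.log 2/2) := by
                  rw [Real.rpow_def_of_pos hhR0]
                  ring_nf
          linarith
  -- final numeric bound
  have hfin : (r:ℝ) * r * ((h:ℝ)+1)^(r-1) + r * ((h:ℝ)+1)^(r-1) * 2 ^ Q.card
      + r * ((h:ℝ)+1)^(r-1) ≤ (h:ℝ) ^ ((r : ℝ) - 1 / 2 + ε) := by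
    have hrR : (1:ℝ) ≤ (r:ℝ) := by exact_mod_cast hr
    have hpow2 : ((h:ℝ)+1)^(r-1) ≤ 2^(r-1) * (h:ℝ)^(r-1) := by
      calc ((h:ℝ)+1)^(r-1) ≤ (2*(h:ℝ))^(r-1) := by
            apply pow_le_pow_left₀ (by linarith) (by linarith)
        _ = 2^(r-1) * (h:ℝ)^(r-1) := mul_pow _ _ _
    have hhalf : (1:ℝ) ≤ (h:ℝ)^(Real.log 2/2) :=
      Real.one_le_rpow hhR (by positivity)
    have step1 : (r:ℝ) * r * ((h:ℝ)+1)^(r-1) + r * ((h:ℝ)+1)^(r-1) * 2 ^ Q.card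
        + r * ((h:ℝ)+1)^(r-1)
        ≤ ((h:ℝ)+1)^(r-1) * (4 * r^2 * (h:ℝ)^(Real.log 2/2)) := by
      set A : ℝ := ((h:ℝ)+1)^(r-1) with hAdef
      set H : ℝ := (h:ℝ)^(Real.log 2/2) with hHdef
      have hA : (0:ℝ) ≤ A := by positivity
      have hH0 : (0:ℝ) ≤ H := Real.rpow_nonneg hhR0.le _
      have k0 : (0:ℝ) ≤ (r:ℝ)^2 - r := by nlinarith
      have key : (r:ℝ)*r + 2*(r:ℝ)*H + r ≤ 4*(r:ℝ)^2*H := by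
        have k1 : 0 ≤ (r:ℝ)^2 * (H - 1) := mul_nonneg (sq_nonneg _) (by linarith)
        have k2 : 0 ≤ H * ((r:ℝ)^2 - r) := mul_nonneg hH0 k0
        nlinarith [k1, k2, k0]
      have hq : (2:ℝ)^Q.card ≤ 2*H := h2c
      have e1 : (r:ℝ) * A * 2 ^ Q.card ≤ (r:ℝ) * A * (2*H) := by
        apply mul_le_mul_of_nonneg_left hq
        positivity
      calc (r:ℝ) * r * A + (r:ℝ) * A * 2 ^ Q.card + (r:ℝ) * A
          ≤ (r:ℝ)*r*A + (r:ℝ)*A*(2*H) + (r:ℝ)*A := by linarith [e1]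
        _ = A * ((r:ℝ)*r + 2*(r:ℝ)*H + r) := by ring
        _ ≤ A * (4*(r:ℝ)^2*H) := mul_le_mul_of_nonneg_left key hA
        _ = A * (4 * (r:ℝ)^2 * H) := by ring
    have step2 : ((h:ℝ)+1)^(r-1) * (4 * r^2 * (h:ℝ)^(Real.log 2/2))
        ≤ C * ((h:ℝ)^(r-1) * (h:ℝ)^(Real.log 2/2)) := by
      rw [hCdef]
      have h4 : (2:ℝ)^(r-1) * 4 = 2^(r+1) := by
        rw [show (4:ℝ) = 2^2 by norm_num, ← pow_add]
        congr 1
        omega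
      calc ((h:ℝ)+1)^(r-1) * (4 * r^2 * (h:ℝ)^(Real.log 2/2))
          ≤ (2^(r-1) * (h:ℝ)^(r-1)) * (4 * r^2 * (h:ℝ)^(Real.log 2/2)) :=
            mul_le_mul_of_nonneg_right hpow2 (by positivity)
        _ = ((2:ℝ)^(r-1) * 4) * r^2 * ((h:ℝ)^(r-1) * (h:ℝ)^(Real.log 2/2)) := by ring
        _ = (2^(r+1) * r^2) * ((h:ℝ)^(r-1) * (h:ℝ)^(Real.log 2/2)) := by rw [h4]
    have step3 : C * ((h:ℝ)^(r-1) * (h:ℝ)^(Real.log 2/2)) ≤ (h:ℝ) ^ ((r : ℝ) - 1 / 2 + ε) := by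
      have hnp : ((h:ℝ)^(r-1) : ℝ) = (h:ℝ)^(((r:ℝ) - 1):ℝ) := by
        rw [← Real.rpow_natCast (h:ℝ) (r-1), Nat.cast_sub hr]
        norm_num
      rw [hnp, ← Real.rpow_add hhR0]
      calc C * (h:ℝ)^((r:ℝ) - 1 + Real.log 2/2)
          ≤ (h:ℝ)^((1:ℝ)/2 - Real.log 2/2) * (h:ℝ)^((r:ℝ) - 1 + Real.log 2/2) := by
            apply mul_le_mul_of_nonneg_right hCh (Real.rpow_nonneg hhR0.le _)
        _ = (h:ℝ)^((r:ℝ) - 1/2) := by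
            rw [← Real.rpow_add hhR0]
            ring_nf
        _ ≤ (h:ℝ) ^ ((r : ℝ) - 1 / 2 + ε) := by
            apply Real.rpow_le_rpow_of_exponent_le hhR
            linarith
    exact le_trans step1 (le_trans step2 step3)
  -- three error bounds
  have t1 := distinct_diff r h hr Q hQ
  have t2 := main_box r h Q hQ hPh
  have t3 : |((h:ℝ)+1)^r * ∏ p ∈ Q, (1 - 1/(p:ℝ))^r
      - (h:ℝ)^r * ∏ p ∈ Q, (1 - 1/(p:ℝ))^r| ≤ r * ((h:ℝ)+1)^(r-1) := by
    rw [← sub_mul, abs_mul]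
    have hpow : |((h:ℝ)+1)^r - (h:ℝ)^r| ≤ r * ((h:ℝ)+1)^(r-1) := by
      have := abs_pow_sub_pow_le'_s10 ((h:ℝ)+1) (h:ℝ) ((h:ℝ)+1) r (by linarith) (by linarith)
        (le_refl _) (by linarith)
      simpa using this
    have hprod : |∏ p ∈ Q, (1 - 1/(p:ℝ))^r| ≤ 1 := by
      have hfac : ∀ p ∈ Q, (0:ℝ) ≤ (1 - 1/(p:ℝ))^r ∧ (1 - 1/(p:ℝ))^r ≤ 1 := by
        intro p hp
        have hp1 : (1:ℝ) ≤ (p:ℝ) := by exact_mod_cast (hQ p hp).pos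
        have hp0 : (0:ℝ) < (p:ℝ) := by linarith
        have h01 : 0 ≤ 1 - 1/(p:ℝ) := by
          rw [sub_nonneg, div_le_one hp0]; exact hp1
        have h11 : 1 - 1/(p:ℝ) ≤ 1 := by
          have : 0 ≤ 1/(p:ℝ) := by positivity
          linarith
        exact ⟨pow_nonneg h01 r, pow_le_one₀ h01 h11⟩
      rw [abs_of_nonneg (Finset.prod_nonneg fun p hp => (hfac p hp).1)]
      exact Finset.prod_le_one (fun p hp => (hfac p hp).1) (fun p hp => (hfac p hp).2)
    calc |((h:ℝ)+1)^r - (h:ℝ)^r| * |∏ p ∈ Q, (1 - 1/(p:ℝ))^r|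
        ≤ (r * ((h:ℝ)+1)^(r-1)) * 1 := by
          apply mul_le_mul hpow hprod (abs_nonneg _) (by positivity)
      _ = r * ((h:ℝ)+1)^(r-1) := by ring
  -- triangle inequality
  have tri : |(∑ a ∈ distinctTuples r h, ∏ p ∈ Q, (1 - (nu p a : ℝ)/(p:ℝ)))
      - (h:ℝ)^r * ∏ p ∈ Q, (1 - 1/(p:ℝ))^r|
      ≤ (r:ℝ) * r * ((h:ℝ)+1)^(r-1) + r * ((h:ℝ)+1)^(r-1) * 2 ^ Q.card
        + r * ((h:ℝ)+1)^(r-1) := by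
    calc |(∑ a ∈ distinctTuples r h, ∏ p ∈ Q, (1 - (nu p a : ℝ)/(p:ℝ)))
        - (h:ℝ)^r * ∏ p ∈ Q, (1 - 1/(p:ℝ))^r|
        ≤ |(∑ a ∈ distinctTuples r h, ∏ p ∈ Q, (1 - (nu p a : ℝ)/(p:ℝ)))
            - ∑ a ∈ Fintype.piFinset (fun _ : Fin r => Finset.Icc (0:ℤ) (h:ℤ)),
                ∏ p ∈ Q, (1 - (nu p a : ℝ)/(p:ℝ))|
          + |(∑ a ∈ Fintype.piFinset (fun _ : Fin r => Finset.Icc (0:ℤ) (h:ℤ)),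
                ∏ p ∈ Q, (1 - (nu p a : ℝ)/(p:ℝ)))
              - ((h:ℝ)+1)^r * ∏ p ∈ Q, (1 - 1/(p:ℝ))^r|
          + |((h:ℝ)+1)^r * ∏ p ∈ Q, (1 - 1/(p:ℝ))^r
              - (h:ℝ)^r * ∏ p ∈ Q, (1 - 1/(p:ℝ))^r| := by
            have := abs_sub_le
              ((∑ a ∈ distinctTuples r h, ∏ p ∈ Q, (1 - (nu p a : ℝ)/(p:ℝ))))
              (((h:ℝ)+1)^r * ∏ p ∈ Q, (1 - 1/(p:ℝ))^r)
              ((h:ℝ)^r * ∏ p ∈ Q, (1 - 1/(p:ℝ))^r)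
            have h2 := abs_sub_le
              ((∑ a ∈ distinctTuples r h, ∏ p ∈ Q, (1 - (nu p a : ℝ)/(p:ℝ))))
              ((∑ a ∈ Fintype.piFinset (fun _ : Fin r => Finset.Icc (0:ℤ) (h:ℤ)),
                ∏ p ∈ Q, (1 - (nu p a : ℝ)/(p:ℝ))))
              (((h:ℝ)+1)^r * ∏ p ∈ Q, (1 - 1/(p:ℝ))^r)
            linarith
      _ ≤ _ := add_le_add (add_le_add t1 t2) t3
  rw [hQdef, hY] at tri
  exact le_trans tri (by rw [← hY, ← hQdef]; exact hfin)
end
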